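/- arXiv:1503.01504 — 3 statements merged into one kernel-verified Lean document; each statement's English description precedes it below -/
import Mathlib

section
/- Let d, n ≥ 1 be integers and let α, L > 0 and 0 < ε₀ ≤ 1. Set τ₁ = max(1, d/(C_α·α·L)), a_n = (τ₁ ln n / n)^{1/α} and b_n = n^{−1/α}. Then for every real number x ≥ 0 satisfying a_n + b_n·x ≤ ε₀ and every pair (μ,K) ∈ M(α,L,ε₀), the probability (under the n-fold product of μ) of the event {d_H(K̂ₙ, K) ≥ 2a_n + 2b_n·x} is at most 12^d · exp(−C_α·L·x^α). -/
open MeasureTheory Metric Set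
open scoped RealInnerProductSpace ENNReal NNReal

noncomputable section

abbrev Euc (d : ℕ) := EuclideanSpace ℝ (Fin d)

def IsConvexBody {d : ℕ} (K : Set (Euc d)) : Prop :=
  Convex ℝ K ∧ IsCompact K ∧ (interior K).Nonempty

def suppFn {d : ℕ} (K : Set (Euc d)) (u : Euc d) : ℝ :=
  sSup ((fun x => (inner ℝ u x : ℝ)) '' K)

def cap {d : ℕ} (K : Set (Euc d)) (u : Euc d) (ε : ℝ) : Set (Euc d) :=
  {x ∈ K | suppFn K u - ε ≤ (inner ℝ u x : ℝ)}

def measSupp {d : ℕ} (μ : Measure (Euc d)) : Set (Euc d) :=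
  (⋃₀ {O : Set (Euc d) | IsOpen O ∧ μ O = 0})ᶜ

def MemM {d : ℕ} (α L ε₀ : ℝ) (μ : Measure (Euc d)) (K : Set (Euc d)) : Prop :=
  IsProbabilityMeasure μ ∧ IsConvexBody K ∧ K ⊆ closedBall 0 1 ∧
    measSupp μ ⊆ K ∧
    ∀ u : Euc d, ‖u‖ = 1 → ∀ ε : ℝ, ε ∈ Icc 0 ε₀ →
      ENNReal.ofReal (L * ε ^ α) ≤ μ (cap K u ε)

def Cconst (α : ℝ) : ℝ := ⨅ t : {t : ℝ // 0 < t}, (1 + t.1) ^ α / (1 + t.1 ^ α)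

def hullOf {d n : ℕ} (ω : Fin n → Euc d) : Set (Euc d) := convexHull ℝ (Set.range ω)

def jointLaw {d : ℕ} (n : ℕ) (μ : Measure (Euc d)) : Measure (Fin n → Euc d) :=
  Measure.pi fun _ => μ

def sphereσ (d : ℕ) : Measure (Euc d) :=
  (Measure.hausdorffMeasure ((d:ℝ)-1) (sphere (0:Euc d) 1))⁻¹ •
    (Measure.hausdorffMeasure ((d:ℝ)-1) : Measure (Euc d)).restrict (sphere (0:Euc d) 1)

def lpNorm (d : ℕ) (p : ℝ) (f : Euc d → ℝ) : ℝ :=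
  (∫ u, |f u| ^ p ∂(sphereσ d)) ^ (1/p)

def unitBallVol (p : ℕ) : ℝ := (volume (closedBall (0 : Euc p) 1)).toReal

def unifOn {d : ℕ} (K : Set (Euc d)) : Measure (Euc d) := (volume K)⁻¹ • volume.restrict K

def unifBd {d : ℕ} (K : Set (Euc d)) : Measure (Euc d) :=
  (Measure.hausdorffMeasure ((d:ℝ)-1) (frontier K))⁻¹ •
    (Measure.hausdorffMeasure ((d:ℝ)-1) : Measure (Euc d)).restrict (frontier K)

def Rolling {d : ℕ} (r : ℝ) (K : Set (Euc d)) : Prop :=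
  ∀ x ∈ frontier K, ∃ c : Euc d, x ∈ closedBall c r ∧ closedBall c r ⊆ K

def Kdr1 (d : ℕ) (r : ℝ) : Set (Set (Euc d)) :=
  {K | IsConvexBody K ∧ K ⊆ closedBall 0 1 ∧ Rolling r K}

def Krd (d : ℕ) (r : ℝ) : Set (Set (Euc d)) :=
  {K | IsConvexBody K ∧ Rolling (r * ((volume K).toReal / unitBallVol d) ^ (1/(d:ℝ))) K}

def dL {d : ℕ} (K K' : Set (Euc d)) : ℝ :=
  sInf {ε : ℝ | 0 ≤ ε ∧ ∃ a : Euc d,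
    (fun y => a + (1 - ε) • (y - a)) '' K ⊆ K' ∧
    K' ⊆ (fun y => a + (1 + ε) • (y - a)) '' K}

section AuxLemmas

lemma Cconst_bdd (α : ℝ) : BddBelow (Set.range (fun t : {t : ℝ // 0 < t} => (1 + t.1) ^ α / (1 + t.1 ^ α))) := by
  refine ⟨0, ?_⟩
  rintro y ⟨t, rfl⟩
  have h1 : (0:ℝ) ≤ 1 + t.1 := by nlinarith [t.2]
  have h2 : (0:ℝ) ≤ t.1 ^ α := Real.rpow_nonneg t.2.le α
  exact div_nonneg (Real.rpow_nonneg h1 α) (by linarith)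

lemma Cconst_le (α : ℝ) {t : ℝ} (ht : 0 < t) : Cconst α ≤ (1 + t) ^ α / (1 + t ^ α) :=
  ciInf_le (Cconst_bdd α) ⟨t, ht⟩

lemma half_le_Cconst {α : ℝ} (hα : 0 < α) : 1/2 ≤ Cconst α := by
  refine le_ciInf fun t => ?_
  obtain ⟨t, ht⟩ := t
  have h2 : (0:ℝ) ≤ t ^ α := Real.rpow_nonneg ht.le α
  rw [le_div_iff₀ (by linarith)]
  rcases le_total t 1 with h | h
  · have h3 : t ^ α ≤ 1 := Real.rpow_le_one ht.le h hα.le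
    have h4 : (1:ℝ) ≤ (1 + t) ^ α := Real.one_le_rpow (by linarith) hα.le
    linarith
  · have h3 : (1:ℝ) ≤ t ^ α := Real.one_le_rpow h hα.le
    have h4 : t ^ α ≤ (1 + t) ^ α := Real.rpow_le_rpow (by linarith) (by linarith) hα.le
    linarith

lemma Cconst_le_one {α : ℝ} (hα : 0 < α) : Cconst α ≤ 1 := by
  set g : ℝ → ℝ := fun s => (1 + s) ^ α / (1 + s ^ α) with hg
  have hcont : ContinuousAt g 0 := by
    have h1 : ContinuousAt (fun s : ℝ => (1 + s) ^ α) 0 := by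
      have := Real.continuousAt_rpow_const (1 + 0 : ℝ) α (Or.inl (by norm_num))
      exact this.comp (by fun_prop)
    have h2 : ContinuousAt (fun s : ℝ => 1 + s ^ α) 0 := by
      have := Real.continuousAt_rpow_const (0:ℝ) α (Or.inr hα.le)
      exact (continuousAt_const.add this)
    have h3 : (1 + (0:ℝ) ^ α) ≠ 0 := by rw [Real.zero_rpow hα.ne']; norm_num
    exact h1.div h2 h3
  have hlim : Filter.Tendsto g (nhdsWithin 0 (Set.Ioi 0)) (nhds 1) := by
    have : g 0 = 1 := by simp [hg, Real.zero_rpow hα.ne', Real.one_rpow]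
    have := hcont.tendsto
    rw [‹g 0 = 1›] at this
    exact this.mono_left nhdsWithin_le_nhds
  refine ge_of_tendsto hlim ?_
  filter_upwards [self_mem_nhdsWithin] with s hs
  exact Cconst_le α hs

lemma Cconst_superadd {α : ℝ} (hα : 0 < α) {a b : ℝ} (ha : 0 ≤ a) (hb : 0 ≤ b) :
    Cconst α * (a ^ α + b ^ α) ≤ (a + b) ^ α := by
  have hC1 := Cconst_le_one hα
  have hC0 : 0 ≤ Cconst α := le_trans (by norm_num) (half_le_Cconst hα)
  rcases eq_or_lt_of_le ha with h | ha'
  · simp [← h, Real.zero_rpow hα.ne']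
    calc Cconst α * b ^ α ≤ 1 * b ^ α := by
          exact mul_le_mul_of_nonneg_right hC1 (Real.rpow_nonneg hb α)
      _ = b ^ α := one_mul _
  rcases eq_or_lt_of_le hb with h | hb'
  · simp [← h, Real.zero_rpow hα.ne']
    calc Cconst α * a ^ α ≤ 1 * a ^ α := by
          exact mul_le_mul_of_nonneg_right hC1 (Real.rpow_nonneg ha α)
      _ = a ^ α := one_mul _
  · set t := b / a with htdef
    have ht : 0 < t := div_pos hb' ha'
    have key := Cconst_le α ht
    have hden : 0 < 1 + t ^ α := by positivity
    have haα : 0 < a ^ α := Real.rpow_pos_of_pos ha' α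
    have h1 : Cconst α * (1 + t ^ α) ≤ (1 + t) ^ α := by
      rw [div_eq_mul_inv] at key
      calc Cconst α * (1 + t ^ α) ≤ ((1 + t) ^ α * (1 + t ^ α)⁻¹) * (1 + t ^ α) := by
            exact mul_le_mul_of_nonneg_right key hden.le
        _ = (1 + t) ^ α := by field_simp
    have h2 : a ^ α * (Cconst α * (1 + t ^ α)) ≤ a ^ α * (1 + t) ^ α :=
      mul_le_mul_of_nonneg_left h1 haα.le
    have e1 : a ^ α * (1 + t) ^ α = (a + b) ^ α := by
      rw [← Real.mul_rpow ha (by linarith)]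
      congr 1
      rw [htdef]
      field_simp
    have e2 : a ^ α * t ^ α = b ^ α := by
      rw [← Real.mul_rpow ha ht.le]
      congr 1
      rw [htdef]
      field_simp
    nlinarith [h2, e1, e2]

variable {d : ℕ} {K : Set (Euc d)}

lemma suppFn_bddAbove (hK : IsCompact K) (u : Euc d) :
    BddAbove ((fun x => (inner ℝ u x : ℝ)) '' K) :=
  (hK.image (continuous_const.inner continuous_id)).bddAbove

lemma inner_le_suppFn (hK : IsCompact K) {x : Euc d} (hx : x ∈ K) (u : Euc d) :
    (inner ℝ u x : ℝ) ≤ suppFn K u :=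
  le_csSup (suppFn_bddAbove hK u) ⟨x, hx, rfl⟩

lemma exists_suppFn_eq (hK : IsCompact K) (hne : K.Nonempty) (u : Euc d) :
    ∃ x ∈ K, (inner ℝ u x : ℝ) = suppFn K u := by
  have hc : IsCompact ((fun x => (inner ℝ u x : ℝ)) '' K) :=
    hK.image (continuous_const.inner continuous_id)
  have := hc.sSup_mem (hne.image _)
  obtain ⟨x, hx, hx2⟩ := this
  exact ⟨x, hx, hx2⟩

lemma suppFn_lip (hK : IsCompact K) (hne : K.Nonempty) (hK1 : K ⊆ closedBall 0 1)
    (u v : Euc d) : suppFn K u ≤ suppFn K v + ‖u - v‖ := by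
  obtain ⟨x, hx, hx2⟩ := exists_suppFn_eq hK hne u
  have h1 : (inner ℝ v x : ℝ) ≤ suppFn K v := inner_le_suppFn hK hx v
  have h2 : (inner ℝ (u - v) x : ℝ) ≤ ‖u - v‖ * ‖x‖ := real_inner_le_norm _ _
  have hx1 : ‖x‖ ≤ 1 := by
    have := hK1 hx; rwa [mem_closedBall, dist_zero_right] at this
  have h3 : (inner ℝ (u - v) x : ℝ) ≤ ‖u - v‖ :=
    h2.trans (by nlinarith [norm_nonneg (u - v)])
  have h4 : (inner ℝ u x : ℝ) = inner ℝ v x + inner ℝ (u - v) x := by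
    rw [inner_sub_left]; ring
  linarith [hx2, h1, h2, h3, h4]

/-- Key geometric lemma: if every cap of depth ε in a direction of a δ-net
contains a point of S, then conv S is (ε+2δ)-close to K in Hausdorff distance. -/
lemma geom_lemma (hKcv : Convex ℝ K) (hK : IsCompact K) (hne : K.Nonempty)
    (hK1 : K ⊆ closedBall 0 1)
    {S : Set (Euc d)} (hSfin : S.Finite) (hSne : S.Nonempty) (hSK : S ⊆ K)
    {ε δ : ℝ} (hε : 0 ≤ ε) (hδ : 0 ≤ δ)
    {F : Finset (Euc d)} (hF : ∀ u ∈ F, u ∈ sphere (0:Euc d) 1)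
    (hcov : sphere (0:Euc d) 1 ⊆ ⋃ u ∈ F, ball u δ)
    (hcap : ∀ u ∈ F, ∃ X ∈ S, suppFn K u - ε ≤ (inner ℝ u X : ℝ)) :
    hausdorffDist (convexHull ℝ S) K ≤ ε + 2 * δ := by
  set P := convexHull ℝ S with hP
  have hPK : P ⊆ K := convexHull_min hSK hKcv
  have hPcomp : IsCompact P := hSfin.isCompact_convexHull ℝ
  have hPne : P.Nonempty := hSne.mono (subset_convexHull ℝ S)
  -- Step A : for every unit vector u there is X ∈ S with ⟪u,X⟫ ≥ h_K(u) - (ε+2δ)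
  have stepA : ∀ u : Euc d, ‖u‖ = 1 → ∃ X ∈ S, suppFn K u - (ε + 2*δ) ≤ (inner ℝ u X : ℝ) := by
    intro u hu
    have hus : u ∈ sphere (0:Euc d) 1 := by
      rwa [mem_sphere, dist_zero_right]
    obtain ⟨v, hvF, hv⟩ : ∃ v ∈ F, u ∈ ball v δ := by
      simpa using hcov hus
    have hdist : ‖u - v‖ < δ := by rwa [mem_ball, dist_eq_norm] at hv
    obtain ⟨X, hXS, hX⟩ := hcap v hvF
    refine ⟨X, hXS, ?_⟩
    have hXK : X ∈ K := hSK hXS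
    have hX1 : ‖X‖ ≤ 1 := by
      have := hK1 hXK; rwa [mem_closedBall, dist_zero_right] at this
    have h1 : (inner ℝ u X : ℝ) = inner ℝ v X + inner ℝ (u - v) X := by
      rw [inner_sub_left]; ring
    have h2 : |(inner ℝ (u - v) X : ℝ)| ≤ ‖u - v‖ * ‖X‖ := abs_real_inner_le_norm _ _
    have h3 : -δ ≤ (inner ℝ (u - v) X : ℝ) := by
      have : ‖u - v‖ * ‖X‖ ≤ δ := by nlinarith [norm_nonneg (u-v), norm_nonneg X]
      cases abs_le.1 (h2.trans this) with
      | intro hl hr => linarith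
    have h4 : suppFn K u ≤ suppFn K v + δ := by
      have := suppFn_lip hK hne hK1 u v
      linarith
    linarith [h1, h3, h4, hX]
  -- Step B : every y ∈ K is within ε+2δ of P
  have stepB : ∀ y ∈ K, ∃ p ∈ P, dist y p ≤ ε + 2*δ := by
    intro y hy
    obtain ⟨p, hpP, hpmin⟩ := exists_norm_eq_iInf_of_complete_convex hPne
      (hPcomp.isClosed.isComplete) (convex_convexHull ℝ S) y
    refine ⟨p, hpP, ?_⟩
    have hproj : ∀ w ∈ P, (inner ℝ (y - p) (w - p) : ℝ) ≤ 0 :=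
      (norm_eq_iInf_iff_real_inner_le_zero (convex_convexHull ℝ S) hpP).1 hpmin
    rcases eq_or_lt_of_le (norm_nonneg (y - p)) with h0 | hr
    · rw [dist_eq_norm]; rw [← h0] at *; linarith
    · set r := ‖y - p‖ with hrdef
      set u := r⁻¹ • (y - p) with hudef
      have hu : ‖u‖ = 1 := by
        rw [hudef, norm_smul, norm_inv, Real.norm_eq_abs, abs_of_pos hr, ← hrdef,
          inv_mul_cancel₀ hr.ne']
      obtain ⟨X, hXS, hX⟩ := stepA u hu
      have hXP : X ∈ P := subset_convexHull ℝ S hXS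
      -- ⟪u, X⟫ ≤ ⟪u, p⟫
      have h5 : (inner ℝ u (X - p) : ℝ) ≤ 0 := by
        rw [hudef, real_inner_smul_left]
        have := hproj X hXP
        have hrinv : (0:ℝ) ≤ r⁻¹ := inv_nonneg.2 hr.le
        nlinarith
      -- ⟪u, y - p⟫ = r
      have h6 : (inner ℝ u (y - p) : ℝ) = r := by
        rw [hudef, real_inner_smul_left, real_inner_self_eq_norm_sq, ← hrdef]
        field_simp
      have h7 : (inner ℝ u y : ℝ) ≤ suppFn K u := inner_le_suppFn hK hy u
      have h8 : (inner ℝ u X : ℝ) = inner ℝ u p + inner ℝ u (X - p) := by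
        rw [inner_sub_right]; ring
      have h9 : (inner ℝ u y : ℝ) = inner ℝ u p + inner ℝ u (y - p) := by
        rw [inner_sub_right]; ring
      have : r ≤ ε + 2*δ := by linarith
      rw [dist_eq_norm]; linarith
  refine hausdorffDist_le_of_mem_dist (by linarith) ?_ ?_
  · intro p hp
    refine ⟨p, hPK hp, ?_⟩
    rw [dist_self]; linarith
  · intro y hy
    obtain ⟨p, hp, hd⟩ := stepB y hy
    exact ⟨p, hp, hd⟩

lemma euc_nontrivial {d : ℕ} (hd : 1 ≤ d) : Nontrivial (Euc d) := by
  have h : 0 < Module.finrank ℝ (Euc d) := by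
    rw [finrank_euclideanSpace_fin]; omega
  exact Module.nontrivial_of_finrank_pos h

lemma sep_card_le (d : ℕ) (hd : 1 ≤ d) {δ : ℝ} (hδ : 0 < δ) (F : Finset (Euc d))
    (hF : ∀ u ∈ F, u ∈ closedBall (0:Euc d) 1)
    (hsep : ∀ x ∈ F, ∀ y ∈ F, x ≠ y → δ ≤ dist x y) :
    (F.card : ℝ) ≤ ((δ + 2)/δ) ^ d := by
  haveI := euc_nontrivial hd
  set V := volume (ball (0:Euc d) 1) with hV
  have hV0 : V ≠ 0 := (measure_ball_pos volume 0 one_pos).ne'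
  have hVt : V ≠ ∞ := measure_ball_lt_top.ne
  have hdisj : (↑F : Set (Euc d)).PairwiseDisjoint (fun u => ball u (δ/2)) := by
    intro x hx y hy hxy
    apply Set.disjoint_left.2
    intro z hzx hzy
    have h1 : dist z x < δ/2 := mem_ball.1 hzx
    have h2 : dist z y < δ/2 := mem_ball.1 hzy
    have h3 : δ ≤ dist x y := hsep x hx y hy hxy
    have := dist_triangle x z y
    rw [dist_comm x z] at this
    linarith
  have hmeas : ∀ u ∈ F, MeasurableSet (ball u (δ/2)) := fun u _ => measurableSet_ball
  have hsub : (⋃ u ∈ F, ball u (δ/2)) ⊆ closedBall (0:Euc d) (1 + δ/2) := by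
    intro z hz
    simp only [mem_iUnion] at hz
    obtain ⟨u, hu, hz⟩ := hz
    have h1 : dist z u < δ/2 := mem_ball.1 hz
    have h2 : dist u 0 ≤ 1 := mem_closedBall.1 (hF u hu)
    have := dist_triangle z u 0
    rw [mem_closedBall]
    linarith
  have hrk : Module.finrank ℝ (Euc d) = d := finrank_euclideanSpace_fin
  have hballvol : ∀ u : Euc d, volume (ball u (δ/2)) = ENNReal.ofReal ((δ/2)^d) * V := by
    intro u
    rw [Measure.addHaar_ball volume u (by linarith), hrk]
  have hcbvol : volume (closedBall (0:Euc d) (1 + δ/2)) = ENNReal.ofReal ((1+δ/2)^d) * V := by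
    rw [Measure.addHaar_closedBall volume _ (by linarith), hrk]
  have hkey : (F.card : ℝ≥0∞) * (ENNReal.ofReal ((δ/2)^d) * V) ≤ ENNReal.ofReal ((1+δ/2)^d) * V := by
    calc (F.card : ℝ≥0∞) * (ENNReal.ofReal ((δ/2)^d) * V)
        = ∑ u ∈ F, volume (ball u (δ/2)) := by
          rw [Finset.sum_congr rfl (fun u _ => hballvol u), Finset.sum_const, nsmul_eq_mul]
      _ = volume (⋃ u ∈ F, ball u (δ/2)) := (measure_biUnion_finset hdisj hmeas).symm
      _ ≤ volume (closedBall (0:Euc d) (1 + δ/2)) := measure_mono hsub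
      _ = _ := hcbvol
  rw [← mul_assoc, mul_comm] at hkey
  rw [mul_comm (ENNReal.ofReal ((1+δ/2)^d)) V] at hkey
  have hkey2 : (F.card : ℝ≥0∞) * ENNReal.ofReal ((δ/2)^d) ≤ ENNReal.ofReal ((1+δ/2)^d) := by
    exact (ENNReal.mul_le_mul_iff_right hV0 hVt).1 hkey
  have hδ2 : (0:ℝ) < (δ/2)^d := by positivity
  have hreal : (F.card : ℝ) * (δ/2)^d ≤ (1+δ/2)^d := by
    have h1 : ENNReal.ofReal ((F.card : ℝ) * (δ/2)^d) ≤ ENNReal.ofReal ((1+δ/2)^d) := by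
      rw [ENNReal.ofReal_mul (by positivity)]
      simpa [ENNReal.ofReal_natCast] using hkey2
    exact (ENNReal.ofReal_le_ofReal_iff (by positivity)).1 h1
  rw [← le_div_iff₀ hδ2] at hreal
  calc (F.card : ℝ) ≤ (1+δ/2)^d / (δ/2)^d := hreal
    _ = ((δ + 2)/δ)^d := by
        rw [← div_pow]
        congr 1
        field_simp
        ring

lemma exists_net (d : ℕ) (hd : 1 ≤ d) {δ : ℝ} (hδ : 0 < δ) :
    ∃ F : Finset (Euc d), (∀ u ∈ F, u ∈ sphere (0:Euc d) 1) ∧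
      (sphere (0:Euc d) 1 ⊆ ⋃ u ∈ F, ball u δ) ∧
      (F.card : ℝ) ≤ ((δ + 2)/δ) ^ d := by
  classical
  set A : Set ℕ := {k | ∃ F : Finset (Euc d), (∀ u ∈ F, u ∈ sphere (0:Euc d) 1) ∧
    (∀ x ∈ F, ∀ y ∈ F, x ≠ y → δ ≤ dist x y) ∧ F.card = k} with hA
  have hcard : ∀ k ∈ A, (k : ℝ) ≤ ((δ + 2)/δ) ^ d := by
    rintro k ⟨F, hFs, hFsep, rfl⟩
    exact sep_card_le d hd hδ F (fun u hu => sphere_subset_closedBall (hFs u hu)) hFsep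
  have hA0 : 0 ∈ A := ⟨∅, by simp, by simp, rfl⟩
  have hAb : BddAbove A := by
    refine ⟨Nat.ceil (((δ + 2)/δ) ^ d), fun k hk => ?_⟩
    have := (hcard k hk).trans (Nat.le_ceil _)
    exact_mod_cast this
  have hmax := Nat.sSup_mem ⟨0, hA0⟩ hAb
  obtain ⟨F, hFs, hFsep, hFcard⟩ := hmax
  refine ⟨F, hFs, ?_, hcard _ ⟨F, hFs, hFsep, rfl⟩⟩
  intro v hv
  by_contra hvc
  simp only [mem_iUnion, mem_ball, not_exists] at hvc
  have hfar : ∀ u ∈ F, δ ≤ dist v u := by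
    intro u hu
    by_contra h
    exact hvc u hu (by linarith)
  have hvF : v ∉ F := by
    intro h
    have := hfar v h
    rw [dist_self] at this
    linarith
  have hnew : F.card + 1 ∈ A := by
    refine ⟨insert v F, ?_, ?_, ?_⟩
    · intro u hu
      rcases Finset.mem_insert.1 hu with h | h
      · exact h ▸ hv
      · exact hFs u h
    · intro a ha b hb hab
      rcases Finset.mem_insert.1 ha with h | h <;> rcases Finset.mem_insert.1 hb with h' | h'
      · exact absurd (h.trans h'.symm) hab
      · subst h; exact hfar b h'
      · subst h'; rw [dist_comm]; exact hfar a h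
      · exact hFsep a h b h' hab
    · rw [Finset.card_insert_of_notMem hvF]
  have : F.card + 1 ≤ sSup A := le_csSup hAb hnew
  omega

lemma supp_null {d : ℕ} (μ : Measure (Euc d)) : μ (measSupp μ)ᶜ = 0 := by
  rw [measSupp, compl_compl]
  obtain ⟨T, hTc, hTS, hTU⟩ := TopologicalSpace.isOpen_sUnion_countable
    {O : Set (Euc d) | IsOpen O ∧ μ O = 0} (fun s hs => hs.1)
  rw [← hTU, measure_sUnion_null_iff hTc]
  exact fun s hs => (hTS hs).2

lemma one_sub_le_exp_neg (y : ℝ) : 1 - y ≤ Real.exp (-y) := by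
  linarith [Real.add_one_le_exp (-y)]

lemma contra_num (ε D : ℝ) (hε0 : 0 < ε) (h1 : 2 * ε ≤ D) (h2 : D ≤ ε + 2*(ε/4)) : False := by
  linarith

lemma log_ge_one {n : ℕ} (hn3 : 3 ≤ n) : (1:ℝ) ≤ Real.log n := by
  have h3 : (3:ℝ) ≤ n := by exact_mod_cast hn3
  have hn0 : (0:ℝ) < n := by linarith only [h3]
  rw [Real.le_log_iff_exp_le hn0]
  nlinarith only [Real.exp_one_lt_d9, h3]

lemma eps_pos (n : ℕ) (hn3 : 3 ≤ n) (α τ₁ aN bN x : ℝ) (hα : 0 < α) (hτ1 : 1 ≤ τ₁)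
    (ha : aN = (τ₁ * Real.log n / n) ^ (1/α)) (hb : bN = (n:ℝ) ^ (-(1/α))) (hx : 0 ≤ x) :
    0 < aN + bN * x := by
  have h3 : (3:ℝ) ≤ n := by exact_mod_cast hn3
  have hn0 : (0:ℝ) < n := by linarith only [h3]
  have hlog1 := log_ge_one hn3
  have hbN0 : 0 < bN := by rw [hb]; exact Real.rpow_pos_of_pos hn0 _
  have haN0 : 0 < aN := by
    rw [ha]
    apply Real.rpow_pos_of_pos
    have h4 : 0 < τ₁ * Real.log n := by nlinarith only [hτ1, hlog1]
    exact div_pos h4 hn0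
  nlinarith only [haN0, mul_nonneg hbN0.le hx]

lemma trivial_numeric (d n : ℕ) (hd : 1 ≤ d) (hn : 1 ≤ n) (hn2 : (n:ℝ) ≤ 2)
    (α L ε₀ : ℝ) (hα : 0 < α) (hL : 0 < L) (hε₀ : 0 < ε₀)
    (bN : ℝ) (hb : bN = (n:ℝ) ^ (-(1/α)))
    (x : ℝ) (hx : 0 ≤ x) (hbx : bN * x ≤ ε₀)
    (hLε₀ : L * ε₀ ^ α ≤ 1)
    (C : ℝ) (hC0 : 0 ≤ C) (hCle : C ≤ 1) :
    (1:ℝ) ≤ 12 ^ d * Real.exp (-(C * L * x ^ α)) := by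
  have h1n : (1:ℝ) ≤ n := by exact_mod_cast hn
  have hn0 : (0:ℝ) < n := by linarith only [h1n]
  have hxb : x ≤ (n:ℝ) ^ (1/α : ℝ) * ε₀ := by
    have hbe : bN * (n:ℝ) ^ (1/α : ℝ) = 1 := by
      rw [hb, ← Real.rpow_add hn0]
      norm_num
    calc x = bN * (n:ℝ) ^ (1/α : ℝ) * x := by rw [hbe]; ring
      _ = (n:ℝ) ^ (1/α : ℝ) * (bN * x) := by ring
      _ ≤ (n:ℝ) ^ (1/α : ℝ) * ε₀ := by
          apply mul_le_mul_of_nonneg_left hbx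
          exact (Real.rpow_pos_of_pos hn0 _).le
  have hxα : x ^ α ≤ (n:ℝ) * ε₀ ^ α := by
    calc x ^ α ≤ ((n:ℝ) ^ (1/α : ℝ) * ε₀) ^ α := Real.rpow_le_rpow hx hxb hα.le
      _ = (n:ℝ) * ε₀ ^ α := by
          rw [Real.mul_rpow (Real.rpow_pos_of_pos hn0 _).le hε₀.le,
            ← Real.rpow_mul hn0.le]
          rw [one_div, inv_mul_cancel₀ hα.ne', Real.rpow_one]
  have hxα0 : 0 ≤ x ^ α := Real.rpow_nonneg hx α
  have hCLx : C * L * x ^ α ≤ 2 := by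
    have h1 : C * L * x ^ α ≤ L * x ^ α := by
      nlinarith only [mul_le_mul_of_nonneg_right hCle (mul_nonneg hL.le hxα0)]
    have h2 : L * x ^ α ≤ L * ((n:ℝ) * ε₀ ^ α) := mul_le_mul_of_nonneg_left hxα hL.le
    nlinarith only [h1, h2, mul_le_mul_of_nonneg_left hLε₀ hn0.le, hn2]
  have h12 : (12:ℝ) ≤ 12 ^ d := by
    calc (12:ℝ) = 12 ^ 1 := (pow_one _).symm
      _ ≤ 12 ^ d := pow_le_pow_right₀ (by norm_num) hd
  have hexp2 : Real.exp (-(2:ℝ)) ≤ Real.exp (-(C * L * x ^ α)) :=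
    Real.exp_le_exp.2 (by linarith only [hCLx])
  have he2 : Real.exp (2:ℝ) ≤ 12 := by
    have h := Real.exp_one_lt_d9
    have h22 : Real.exp 2 = Real.exp 1 * Real.exp 1 := by
      rw [← Real.exp_add]; norm_num
    nlinarith only [Real.exp_pos 1, h, h22]
  have hkey : (1:ℝ) ≤ 12 * Real.exp (-(2:ℝ)) := by
    have h := mul_le_mul_of_nonneg_right he2 (inv_nonneg.2 (Real.exp_pos 2).le)
    rw [mul_inv_cancel₀ (Real.exp_pos 2).ne'] at h
    rw [Real.exp_neg]
    exact h
  calc (1:ℝ) ≤ 12 * Real.exp (-(2:ℝ)) := hkey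
    _ ≤ 12 ^ d * Real.exp (-(C * L * x ^ α)) := by
        apply mul_le_mul h12 hexp2 (Real.exp_pos _).le (by positivity)

lemma key_numeric (d n : ℕ) (hd : 1 ≤ d) (hn3 : 3 ≤ n)
    (α L ε₀ : ℝ) (hα : 0 < α) (hL : 0 < L) (hε₀ : 0 < ε₀) (hε₀1 : ε₀ ≤ 1)
    (C : ℝ) (hCge : 1/2 ≤ C) (hCle : C ≤ 1)
    (τ₁ aN bN : ℝ) (hτ1 : 1 ≤ τ₁) (hτd : (d:ℝ) / (C * α * L) ≤ τ₁)
    (ha : aN = (τ₁ * Real.log n / n) ^ (1/α)) (hb : bN = (n:ℝ) ^ (-(1/α)))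
    (x : ℝ) (hx : 0 ≤ x) (hxε : aN + bN * x ≤ ε₀)
    (hCsup : C * (aN ^ α + (bN * x) ^ α) ≤ (aN + bN * x) ^ α)
    (c : ℝ) (hc0 : 0 ≤ c)
    (hc : c ≤ (((aN + bN * x)/4 + 2)/((aN + bN * x)/4)) ^ d) :
    c * Real.exp (-((n:ℝ) * (L * (aN + bN * x) ^ α)))
      ≤ 12 ^ d * Real.exp (-(C * L * x ^ α)) := by
  have hC0 : 0 < C := lt_of_lt_of_le (by norm_num) hCge
  have h3 : (3:ℝ) ≤ n := by exact_mod_cast hn3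
  have hn0 : (0:ℝ) < n := by linarith only [h3]
  have hlog1 := log_ge_one hn3
  have hlogn : 0 ≤ Real.log n := by linarith only [hlog1]
  have hbN0 : 0 < bN := by rw [hb]; exact Real.rpow_pos_of_pos hn0 _
  have haN0 : 0 < aN := by
    rw [ha]
    apply Real.rpow_pos_of_pos
    have h4 : 0 < τ₁ * Real.log n := by nlinarith only [hτ1, hlog1]
    exact div_pos h4 hn0
  set ε : ℝ := aN + bN * x with hεdef
  clear_value ε
  have hε0 : 0 < ε := by nlinarith only [haN0, mul_nonneg hbN0.le hx, hεdef]
  have hεε₀ : ε ≤ ε₀ := hxε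
  set e : ℝ := Real.exp (Real.log n / α) with hedef
  clear_value e
  have he0 : 0 < e := hedef ▸ Real.exp_pos _
  have he1 : 1 ≤ e := hedef ▸ Real.one_le_exp (div_nonneg hlogn hα.le)
  have hrpow_e : (n:ℝ) ^ (1/α : ℝ) = e := by
    rw [Real.rpow_def_of_pos hn0, hedef]
    congr 1
    ring
  have hεlow : 1/e ≤ ε := by
    have h11 : (1:ℝ) ≤ τ₁ * Real.log n := by
      nlinarith only [mul_nonneg (sub_nonneg.2 hτ1) (sub_nonneg.2 hlog1), hτ1, hlog1]
    have h1n : (1:ℝ)/n ≤ τ₁ * Real.log n / n := by gcongr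
    have haNlow : ((1:ℝ)/(n:ℝ)) ^ (1/α : ℝ) ≤ aN := by
      rw [ha]
      exact Real.rpow_le_rpow (by positivity) h1n (one_div_nonneg.2 hα.le)
    have heq : ((1:ℝ)/(n:ℝ)) ^ (1/α : ℝ) = 1/e := by
      rw [one_div, Real.inv_rpow hn0.le, hrpow_e, one_div]
    rw [heq] at haNlow
    nlinarith only [haNlow, hεdef, mul_nonneg hbN0.le hx]
  have h1e : (1:ℝ) ≤ ε * e := by
    rw [div_le_iff₀ he0] at hεlow
    linarith only [hεlow]
  have hδ0 : 0 < ε/4 := by linarith only [hε0]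
  have hcard12 : c ≤ (12 * e) ^ d := by
    have hstep : (ε/4 + 2)/(ε/4) ≤ 12 * e := by
      rw [div_le_iff₀ hδ0]
      nlinarith only [hεε₀, hε0, he1, hε₀1, h1e]
    calc c ≤ ((ε/4 + 2)/(ε/4)) ^ d := hc
      _ ≤ (12*e)^d :=
          pow_le_pow_left₀ (div_nonneg (by linarith only [hε0]) (by linarith only [hε0])) hstep d
  have haNα : aN ^ α = τ₁ * Real.log n / n := by
    have hb0 : (0:ℝ) ≤ τ₁ * Real.log n / n :=
      div_nonneg (mul_nonneg (by linarith only [hτ1]) hlogn) hn0.le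
    rw [ha, ← Real.rpow_mul hb0]
    rw [one_div, inv_mul_cancel₀ hα.ne', Real.rpow_one]
  have hbNα : (bN * x) ^ α = x ^ α / n := by
    rw [Real.mul_rpow hbN0.le hx, hb, ← Real.rpow_mul hn0.le]
    rw [neg_mul, one_div, inv_mul_cancel₀ hα.ne', Real.rpow_neg_one]
    ring
  rw [haNα, hbNα] at hCsup
  have hτCL : (d:ℝ) ≤ τ₁ * (C * α * L) := by
    rw [div_le_iff₀ (mul_pos (mul_pos hC0 hα) hL)] at hτd
    linarith only [hτd]
  have hexpkey : (d:ℝ) * (Real.log n / α) + C * L * x ^ α ≤ n * (L * ε ^ α) := by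
    have hmono : (n:ℝ) * (L * (C * (τ₁ * Real.log n / n + x ^ α / n))) ≤ n * (L * ε ^ α) := by
      apply mul_le_mul_of_nonneg_left _ hn0.le
      exact mul_le_mul_of_nonneg_left hCsup hL.le
    have hident : (n:ℝ) * (L * (C * (τ₁ * Real.log n / n + x ^ α / n)))
        = C * L * τ₁ * Real.log n + C * L * x ^ α := by
      field_simp
    rw [hident] at hmono
    have hd2 : (d:ℝ) * (Real.log n / α) ≤ C * L * τ₁ * Real.log n := by
      have h5 : (d:ℝ)/α ≤ C * L * τ₁ := by
        rw [div_le_iff₀ hα]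
        nlinarith only [hτCL]
      have h6 := mul_le_mul_of_nonneg_right h5 hlogn
      calc (d:ℝ) * (Real.log n / α) = (d:ℝ)/α * Real.log n := by ring
        _ ≤ C * L * τ₁ * Real.log n := h6
    linarith only [hmono, hd2]
  have hed : e ^ d = Real.exp (d * (Real.log n / α)) := by
    rw [hedef, ← Real.exp_nat_mul]
  have hexple : Real.exp (-((n:ℝ) * (L * ε ^ α)))
      ≤ Real.exp (-((d:ℝ) * (Real.log n / α))) * Real.exp (-(C * L * x ^ α)) := by
    rw [← Real.exp_add]
    apply Real.exp_le_exp.2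
    linarith only [hexpkey]
  calc c * Real.exp (-((n:ℝ) * (L * ε ^ α)))
      ≤ (12 * e) ^ d * (Real.exp (-((d:ℝ) * (Real.log n / α))) * Real.exp (-(C * L * x ^ α))) := by
        apply mul_le_mul hcard12 hexple (by positivity)
          (pow_nonneg (by linarith only [he1]) d)
    _ = 12 ^ d * (e ^ d * Real.exp (-((d:ℝ) * (Real.log n / α)))) * Real.exp (-(C * L * x ^ α)) := by
        rw [mul_pow]; ring
    _ = 12 ^ d * Real.exp (-(C * L * x ^ α)) := by
        rw [hed, ← Real.exp_add]
        simp

end AuxLemmas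

theorem stmt0 (d n : ℕ) (hd : 1 ≤ d) (hn : 1 ≤ n)
    (α L ε₀ : ℝ) (hα : 0 < α) (hL : 0 < L) (hε₀ : 0 < ε₀) (hε₀1 : ε₀ ≤ 1)
    (τ₁ aN bN : ℝ)
    (hτ : τ₁ = max 1 (d / (Cconst α * α * L)))
    (ha : aN = (τ₁ * Real.log n / n) ^ (1/α))
    (hb : bN = (n : ℝ) ^ (-(1/α)))
    (x : ℝ) (hx : 0 ≤ x) (hxε : aN + bN * x ≤ ε₀)
    (μ : Measure (Euc d)) (K : Set (Euc d)) (hμK : MemM α L ε₀ μ K) :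
    jointLaw n μ {ω : Fin n → Euc d | 2 * aN + 2 * bN * x ≤ hausdorffDist (hullOf ω) K}
      ≤ ENNReal.ofReal (12 ^ d * Real.exp (-(Cconst α * L * x ^ α))) := by
  classical
  obtain ⟨hprob, ⟨hKcv, hKcomp, hKint⟩, hK1, hsupp, hcapM⟩ := hμK
  haveI := hprob
  have hKne : K.Nonempty := hKint.mono interior_subset
  have hCge : 1/2 ≤ Cconst α := half_le_Cconst hα
  have hCle : Cconst α ≤ 1 := Cconst_le_one hα
  have hτ1 : 1 ≤ τ₁ := hτ ▸ le_max_left _ _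
  have hτd : (d:ℝ) / (Cconst α * α * L) ≤ τ₁ := hτ ▸ le_max_right _ _
  have hn0 : (0:ℝ) < n := by exact_mod_cast hn
  have hbN0 : 0 < bN := by rw [hb]; exact Real.rpow_pos_of_pos hn0 _
  have hlogn : (0:ℝ) ≤ Real.log n := Real.log_nonneg (by exact_mod_cast hn)
  have haN0 : 0 ≤ aN := by
    rw [ha]
    exact Real.rpow_nonneg
      (div_nonneg (mul_nonneg (le_trans zero_le_one hτ1) hlogn) hn0.le) _
  have hJuniv : jointLaw n μ Set.univ = 1 := by
    rw [jointLaw, Measure.pi_univ]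
    simp
  have hLε₀ : L * ε₀ ^ α ≤ 1 := by
    set u₀ : Euc d := EuclideanSpace.single (⟨0, hd⟩ : Fin d) (1:ℝ) with hu₀def
    have hu₀ : ‖u₀‖ = 1 := by rw [hu₀def, EuclideanSpace.norm_single]; norm_num
    have h := hcapM u₀ hu₀ ε₀ ⟨hε₀.le, le_refl _⟩
    have h2 : μ (cap K u₀ ε₀) ≤ 1 := by
      calc μ (cap K u₀ ε₀) ≤ μ Set.univ := measure_mono (subset_univ _)
        _ = 1 := measure_univ
    exact ENNReal.ofReal_le_one.1 (h.trans h2)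
  by_cases h3 : 3 ≤ n
  · -- main case
    have hε0 : 0 < aN + bN * x := eps_pos n h3 α τ₁ aN bN x hα hτ1 ha hb hx
    have hδ0 : 0 < (aN + bN * x)/4 := div_pos hε0 (by norm_num)
    obtain ⟨F, hFs, hFcov, hFcard⟩ := exists_net d hd hδ0
    set Au : Euc d → Set (Fin n → Euc d) :=
      fun u => {ω : Fin n → Euc d | ∀ j, ω j ∈ (cap K u (aN + bN * x))ᶜ} with hAudef
    set Bad : Set (Fin n → Euc d) := {ω : Fin n → Euc d | ∃ j, ω j ∉ K} with hBaddef
    haveI : Nonempty (Fin n) := ⟨⟨0, hn⟩⟩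
    -- inclusion
    have hincl : {ω : Fin n → Euc d | 2 * aN + 2 * bN * x ≤ hausdorffDist (hullOf ω) K}
        ⊆ (⋃ u ∈ F, Au u) ∪ Bad := by
      intro ω hω
      rw [mem_setOf_eq] at hω
      by_contra hc
      rw [mem_union, not_or] at hc
      obtain ⟨h1, h2⟩ := hc
      simp only [mem_iUnion, not_exists] at h1
      have hωK : ∀ j, ω j ∈ K := by
        by_contra hk
        push_neg at hk
        exact h2 hk
      have hcap' : ∀ u ∈ F, ∃ X ∈ Set.range ω, suppFn K u - (aN + bN * x) ≤ (inner ℝ u X : ℝ) := by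
        intro u hu
        have hne := h1 u hu
        rw [hAudef, mem_setOf_eq] at hne
        push_neg at hne
        obtain ⟨j, hj⟩ := hne
        rw [notMem_compl_iff] at hj
        exact ⟨ω j, mem_range_self j, hj.2⟩
      have hgeo := geom_lemma hKcv hKcomp hKne hK1 (finite_range ω) (range_nonempty ω)
        (fun y hy => by obtain ⟨j, rfl⟩ := hy; exact hωK j) hε0.le hδ0.le hFs hFcov hcap'
      exact contra_num (aN + bN * x) (hausdorffDist (hullOf ω) K) hε0
        (by linarith only [hω]) hgeo
    -- cap measure bounds
    have hμcapc : ∀ u ∈ F, μ ((cap K u (aN + bN * x))ᶜ)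
        ≤ ENNReal.ofReal (Real.exp (-(L * (aN + bN * x) ^ α))) := by
      intro u hu
      have hunit : ‖u‖ = 1 := by
        have := hFs u hu; rwa [mem_sphere, dist_zero_right] at this
      have hcb := hcapM u hunit (aN + bN * x) ⟨hε0.le, hxε⟩
      have hcapm : MeasurableSet (cap K u (aN + bN * x)) := by
        have hcl : IsClosed {y : Euc d | suppFn K u - (aN + bN * x) ≤ (inner ℝ u y : ℝ)} :=
          isClosed_le continuous_const (continuous_const.inner continuous_id)
        exact (hKcomp.isClosed.measurableSet).inter hcl.measurableSet
      have hLεα : 0 ≤ L * (aN + bN * x) ^ α :=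
        mul_nonneg hL.le (Real.rpow_nonneg hε0.le _)
      calc μ ((cap K u (aN + bN * x))ᶜ) = 1 - μ (cap K u (aN + bN * x)) := by
            rw [measure_compl hcapm (measure_ne_top μ _), measure_univ]
        _ ≤ 1 - ENNReal.ofReal (L * (aN + bN * x) ^ α) := tsub_le_tsub_left hcb 1
        _ = ENNReal.ofReal (1 - L * (aN + bN * x) ^ α) := by
            rw [ENNReal.ofReal_sub _ hLεα, ENNReal.ofReal_one]
        _ ≤ ENNReal.ofReal (Real.exp (-(L * (aN + bN * x) ^ α))) :=
            ENNReal.ofReal_le_ofReal (one_sub_le_exp_neg _)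
    -- product bound
    have hAu : ∀ u ∈ F, jointLaw n μ (Au u)
        ≤ ENNReal.ofReal (Real.exp (-((n:ℝ) * (L * (aN + bN * x) ^ α)))) := by
      intro u hu
      have hset : Au u = Set.pi Set.univ (fun _ : Fin n => (cap K u (aN + bN * x))ᶜ) := by
        ext ω
        simp [hAudef, Set.mem_pi]
      rw [hset, jointLaw, Measure.pi_pi, Finset.prod_const, Finset.card_univ, Fintype.card_fin]
      calc μ ((cap K u (aN + bN * x))ᶜ) ^ n
          ≤ (ENNReal.ofReal (Real.exp (-(L * (aN + bN * x) ^ α)))) ^ n :=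
            pow_le_pow_left' (hμcapc u hu) n
        _ = ENNReal.ofReal (Real.exp (-(L * (aN + bN * x) ^ α)) ^ n) :=
            (ENNReal.ofReal_pow (Real.exp_nonneg _) n).symm
        _ = ENNReal.ofReal (Real.exp (-((n:ℝ) * (L * (aN + bN * x) ^ α)))) := by
            rw [← Real.exp_nat_mul]
            ring_nf
    -- bad set is null
    have hKc : μ Kᶜ = 0 :=
      measure_mono_null (compl_subset_compl.2 hsupp) (supp_null μ)
    have hBad : jointLaw n μ Bad = 0 := by
      have hsub : Bad ⊆ ⋃ j : Fin n,
          Set.pi Set.univ (Function.update (fun _ : Fin n => (Set.univ : Set (Euc d))) j Kᶜ) := by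
        intro ω hω
        obtain ⟨j, hj⟩ := hω
        refine mem_iUnion.2 ⟨j, ?_⟩
        intro i _
        by_cases h : i = j
        · subst h; simpa [Function.update_self] using hj
        · simp [Function.update_of_ne h]
      refine measure_mono_null hsub ?_
      rw [measure_iUnion_null_iff]
      intro j
      rw [jointLaw, Measure.pi_pi]
      apply Finset.prod_eq_zero (Finset.mem_univ j)
      simp [Function.update_self, hKc]
    -- key real inequality
    have hCsup := Cconst_superadd hα haN0 (mul_nonneg hbN0.le hx)
    have hkey := key_numeric d n hd h3 α L ε₀ hα hL hε₀ hε₀1 (Cconst α) hCge hCle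
      τ₁ aN bN hτ1 hτd ha hb x hx hxε hCsup (F.card : ℝ) (Nat.cast_nonneg _) hFcard
    calc jointLaw n μ {ω : Fin n → Euc d | 2 * aN + 2 * bN * x ≤ hausdorffDist (hullOf ω) K}
        ≤ jointLaw n μ ((⋃ u ∈ F, Au u) ∪ Bad) := measure_mono hincl
      _ ≤ jointLaw n μ (⋃ u ∈ F, Au u) + jointLaw n μ Bad := measure_union_le _ _
      _ = jointLaw n μ (⋃ u ∈ F, Au u) := by rw [hBad, add_zero]
      _ ≤ ∑ u ∈ F, jointLaw n μ (Au u) := measure_biUnion_finset_le _ _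
      _ ≤ ∑ u ∈ F, ENNReal.ofReal (Real.exp (-((n:ℝ) * (L * (aN + bN * x) ^ α)))) :=
          Finset.sum_le_sum hAu
      _ = (F.card : ℝ≥0∞) * ENNReal.ofReal (Real.exp (-((n:ℝ) * (L * (aN + bN * x) ^ α)))) := by
          rw [Finset.sum_const, nsmul_eq_mul]
      _ = ENNReal.ofReal ((F.card : ℝ) * Real.exp (-((n:ℝ) * (L * (aN + bN * x) ^ α)))) := by
          rw [ENNReal.ofReal_mul (Nat.cast_nonneg _), ENNReal.ofReal_natCast]
      _ ≤ ENNReal.ofReal (12 ^ d * Real.exp (-(Cconst α * L * x ^ α))) :=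
          ENNReal.ofReal_le_ofReal hkey
  · -- trivial case : n ≤ 2
    have hn2 : (n:ℝ) ≤ 2 := by exact_mod_cast (by omega : n ≤ 2)
    have hbx : bN * x ≤ ε₀ := le_trans (le_add_of_nonneg_left haN0) hxε
    have hrhs := trivial_numeric d n hd hn hn2 α L ε₀ hα hL hε₀ bN hb x hx hbx hLε₀
      (Cconst α) (le_trans (by norm_num) hCge) hCle
    calc jointLaw n μ {ω : Fin n → Euc d | 2 * aN + 2 * bN * x ≤ hausdorffDist (hullOf ω) K}
        ≤ jointLaw n μ Set.univ := measure_mono (subset_univ _)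
      _ = 1 := hJuniv
      _ ≤ ENNReal.ofReal (12 ^ d * Real.exp (-(Cconst α * L * x ^ α))) :=
          ENNReal.one_le_ofReal.2 hrhs
end
end

section
/- Let d ≥ 1 be an integer, α, L > 0, 0 < ε₀ ≤ 1, and let p, q ≥ 1 be real numbers. There exists a constant C > 0, depending only on d, α, L, ε₀, p and q, such that for all integers n ≥ 1, sup over (μ,K) ∈ M(α,L,ε₀) of E_μ[|S_p(K) − S_p(K̂ₙ)|^q] ≤ C·n^{−q/α}, where S_p(K) = ‖φ_K‖_p (for p = 1 this is the mean width functional). -/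
open MeasureTheory Metric Set
open scoped RealInnerProductSpace ENNReal NNReal

noncomputable section

namespace Stmt5Aux

variable {d : ℕ}

lemma bddAbove_inner_image {K : Set (Euc d)} (hK1 : K ⊆ closedBall 0 1) (u : Euc d) :
    BddAbove ((fun x => (inner ℝ u x : ℝ)) '' K) := by
  refine ⟨‖u‖, ?_⟩
  rintro y ⟨x, hx, rfl⟩
  calc (inner ℝ u x : ℝ) ≤ ‖u‖ * ‖x‖ := real_inner_le_norm u x
    _ ≤ ‖u‖ * 1 := by
        have := hK1 hx
        rw [mem_closedBall, dist_zero_right] at this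
        exact mul_le_mul_of_nonneg_left this (norm_nonneg u)
    _ = ‖u‖ := mul_one _

lemma le_suppFn {K : Set (Euc d)} (hK1 : K ⊆ closedBall 0 1) {x : Euc d} (hx : x ∈ K)
    (u : Euc d) : (inner ℝ u x : ℝ) ≤ suppFn K u :=
  le_csSup (bddAbove_inner_image hK1 u) ⟨x, hx, rfl⟩

lemma suppFn_le {K : Set (Euc d)} (hK0 : K.Nonempty) {u : Euc d} {c : ℝ}
    (h : ∀ x ∈ K, (inner ℝ u x : ℝ) ≤ c) : suppFn K u ≤ c := by
  apply csSup_le (hK0.image _)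
  rintro y ⟨x, hx, rfl⟩; exact h x hx

lemma suppFn_le_norm {K : Set (Euc d)} (hK0 : K.Nonempty) (hK1 : K ⊆ closedBall 0 1)
    (u : Euc d) : suppFn K u ≤ ‖u‖ := by
  refine suppFn_le hK0 fun x hx => ?_
  calc (inner ℝ u x : ℝ) ≤ ‖u‖ * ‖x‖ := real_inner_le_norm u x
    _ ≤ ‖u‖ * 1 := by
        have := hK1 hx
        rw [mem_closedBall, dist_zero_right] at this
        exact mul_le_mul_of_nonneg_left this (norm_nonneg u)
    _ = ‖u‖ := mul_one _

lemma suppFn_sub_le {K : Set (Euc d)} (hK0 : K.Nonempty) (hK1 : K ⊆ closedBall 0 1)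
    (u v : Euc d) : suppFn K u ≤ suppFn K v + ‖u - v‖ := by
  refine suppFn_le hK0 fun x hx => ?_
  have h1 : (inner ℝ u x : ℝ) = inner ℝ v x + inner ℝ (u - v) x := by
    rw [inner_sub_left]; ring
  have h2 : (inner ℝ (u - v) x : ℝ) ≤ ‖u - v‖ * ‖x‖ := real_inner_le_norm _ _
  have hx1 : ‖x‖ ≤ 1 := by
    have := hK1 hx; rwa [mem_closedBall, dist_zero_right] at this
  have := le_suppFn hK1 hx v
  nlinarith [norm_nonneg (u - v)]

lemma continuous_suppFn {K : Set (Euc d)} (hK0 : K.Nonempty) (hK1 : K ⊆ closedBall 0 1) :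
    Continuous (suppFn K) := by
  have : LipschitzWith 1 (suppFn K) := by
    refine LipschitzWith.of_dist_le_mul fun u v => ?_
    rw [Real.dist_eq, NNReal.coe_one, one_mul, abs_le]
    constructor
    · have := suppFn_sub_le hK0 hK1 v u
      rw [dist_comm, dist_eq_norm]; linarith
    · have := suppFn_sub_le hK0 hK1 u v
      rw [dist_eq_norm]; linarith
  exact this.continuous

lemma suppFn_nonneg_two {K : Set (Euc d)} (hK0 : K.Nonempty) (hK1 : K ⊆ closedBall 0 1)
    (u : Euc d) : 0 ≤ suppFn K u + suppFn K (-u) := by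
  obtain ⟨x, hx⟩ := hK0
  have h1 := le_suppFn hK1 hx u
  have h2 := le_suppFn hK1 hx (-u)
  have : (inner ℝ (-u) x : ℝ) = -(inner ℝ u x : ℝ) := by rw [inner_neg_left]
  linarith

end Stmt5Aux
namespace Stmt5Aux

variable {d : ℕ}

lemma suppFn_hullOf_eq {n : ℕ} (hne : (Finset.univ : Finset (Fin n)).Nonempty)
    (ω : Fin n → Euc d) (u : Euc d) :
    suppFn (hullOf ω) u = Finset.univ.sup' hne (fun i => (inner ℝ u (ω i) : ℝ)) := by
  set c := Finset.univ.sup' hne (fun i => (inner ℝ u (ω i) : ℝ)) with hc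
  have hhalf : hullOf ω ⊆ {x : Euc d | (inner ℝ u x : ℝ) ≤ c} := by
    apply convexHull_min
    · rintro _ ⟨i, rfl⟩
      exact Finset.le_sup' (fun i => (inner ℝ u (ω i) : ℝ)) (Finset.mem_univ i)
    · refine convex_halfSpace_le ⟨fun x y => inner_add_right u x y, fun r x => ?_⟩ c
      exact real_inner_smul_right u x r
  have hbdd : BddAbove ((fun x => (inner ℝ u x : ℝ)) '' hullOf ω) := by
    refine ⟨c, ?_⟩; rintro y ⟨x, hx, rfl⟩; exact hhalf hx
  obtain ⟨i₀, -, hi₀⟩ := Finset.exists_mem_eq_sup' hne (fun i => (inner ℝ u (ω i) : ℝ))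
  apply le_antisymm
  · apply csSup_le
    · obtain ⟨i, -⟩ := hne
      exact ⟨_, ⟨ω i, subset_convexHull ℝ _ ⟨i, rfl⟩, rfl⟩⟩
    · rintro y ⟨x, hx, rfl⟩; exact hhalf hx
  · rw [hc, hi₀]
    exact le_csSup hbdd ⟨ω i₀, subset_convexHull ℝ _ ⟨i₀, rfl⟩, rfl⟩

lemma hull_subset {n : ℕ} {K : Set (Euc d)} (hK : Convex ℝ K) {ω : Fin n → Euc d}
    (hω : ∀ i, ω i ∈ K) : hullOf ω ⊆ K := by
  apply convexHull_min _ hK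
  rintro _ ⟨i, rfl⟩; exact hω i

lemma continuous_gmax {n : ℕ} (hne : (Finset.univ : Finset (Fin n)).Nonempty) :
    Continuous (fun z : (Fin n → Euc d) × Euc d =>
      Finset.univ.sup' hne (fun i => (inner ℝ z.2 (z.1 i) : ℝ))) := by
  apply Continuous.finset_sup'_apply hne
  intro i _
  have : Continuous (fun z : (Fin n → Euc d) × Euc d => (z.2, z.1 i)) :=
    (continuous_snd).prodMk ((continuous_apply i).comp continuous_fst)
  exact continuous_inner.comp this

lemma continuous_gmax_neg {n : ℕ} (hne : (Finset.univ : Finset (Fin n)).Nonempty) :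
    Continuous (fun z : (Fin n → Euc d) × Euc d =>
      Finset.univ.sup' hne (fun i => (inner ℝ (-z.2) (z.1 i) : ℝ))) := by
  apply Continuous.finset_sup'_apply hne
  intro i _
  exact continuous_inner.comp (continuous_snd.neg.prodMk ((continuous_apply i).comp
    continuous_fst))

lemma continuous_gmax_left {n : ℕ} (hne : (Finset.univ : Finset (Fin n)).Nonempty)
    (v : Euc d) :
    Continuous (fun ω : Fin n → Euc d =>
      Finset.univ.sup' hne (fun i => (inner ℝ v (ω i) : ℝ))) := by
  apply Continuous.finset_sup'_apply hne
  intro i _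
  exact continuous_inner.comp (continuous_const.prodMk (continuous_apply i))

lemma continuous_gmax_right {n : ℕ} (hne : (Finset.univ : Finset (Fin n)).Nonempty)
    (ω : Fin n → Euc d) :
    Continuous (fun u : Euc d =>
      Finset.univ.sup' hne (fun i => (inner ℝ u (ω i) : ℝ))) := by
  apply Continuous.finset_sup'_apply hne
  intro i _
  exact continuous_inner.comp (continuous_id.prodMk continuous_const)

lemma continuous_gmax_right_neg {n : ℕ} (hne : (Finset.univ : Finset (Fin n)).Nonempty)
    (ω : Fin n → Euc d) :
    Continuous (fun u : Euc d =>
      Finset.univ.sup' hne (fun i => (inner ℝ (-u) (ω i) : ℝ))) := by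
  apply Continuous.finset_sup'_apply hne
  intro i _
  exact continuous_inner.comp (continuous_neg.prodMk continuous_const)

end Stmt5Aux
namespace Stmt5Aux

variable {d : ℕ}

lemma measure_compl_measSupp (μ : Measure (Euc d)) : μ (measSupp μ)ᶜ = 0 := by
  rw [measSupp, compl_compl]
  obtain ⟨T, hTc, hTsub, hTeq⟩ := TopologicalSpace.isOpen_sUnion_countable
    {O : Set (Euc d) | IsOpen O ∧ μ O = 0} (fun O hO => hO.1)
  rw [← hTeq, measure_sUnion_null_iff hTc]
  exact fun s hs => (hTsub hs).2

lemma sphereσ_univ_le (d : ℕ) : sphereσ d Set.univ ≤ 1 := by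
  rw [sphereσ, Measure.smul_apply, smul_eq_mul, Measure.restrict_apply MeasurableSet.univ,
    Set.univ_inter]
  exact ENNReal.inv_mul_le_one _

instance : IsFiniteMeasure (sphereσ d) := by
  constructor
  exact lt_of_le_of_lt (sphereσ_univ_le d) (by norm_num)

lemma sphereσ_compl_sphere (d : ℕ) : sphereσ d (sphere (0 : Euc d) 1)ᶜ = 0 := by
  rw [sphereσ, Measure.smul_apply, smul_eq_mul,
    Measure.restrict_apply (isClosed_sphere).measurableSet.compl]
  simp

lemma ae_sphere (d : ℕ) : ∀ᵐ u ∂(sphereσ d), ‖u‖ = 1 := by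
  have := sphereσ_compl_sphere d
  filter_upwards [MeasureTheory.ae_iff.mpr (by exact this)] with u hu
  simpa [mem_sphere_iff_norm] using hu

/-- Jensen-type inequality for `c ≤ 1` powers on a sub-probability measure. -/
lemma lintegral_rpow_le_rpow_lintegral {X : Type*} [MeasurableSpace X] (ν : Measure X)
    (hν : ν Set.univ ≤ 1) {F : X → ℝ≥0∞} (hF : AEMeasurable F ν) {c : ℝ}
    (hc0 : 0 < c) (hc1 : c ≤ 1) :
    ∫⁻ x, (F x) ^ c ∂ν ≤ (∫⁻ x, F x ∂ν) ^ c := by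
  rcases eq_or_lt_of_le hc1 with rfl | hlt
  · simp
  have hpq : (1/c).HolderConjugate (1/(1-c)) := by
    rw [Real.holderConjugate_iff]
    constructor
    · rw [lt_div_iff₀ hc0]; linarith
    · rw [one_div, inv_inv, one_div, inv_inv]; ring
  have h := ENNReal.lintegral_mul_le_Lp_mul_Lq ν hpq (hF.pow_const c) aemeasurable_const
    (g := fun _ => (1:ℝ≥0∞))
  simp only [Pi.mul_apply, mul_one] at h
  calc ∫⁻ x, (F x) ^ c ∂ν ≤
      (∫⁻ x, ((F x) ^ c) ^ (1/c) ∂ν) ^ (1/(1/c)) *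
        (∫⁻ _, (1:ℝ≥0∞) ^ (1/(1-c)) ∂ν) ^ (1/(1/(1-c))) := by
        simpa using h
    _ ≤ (∫⁻ x, F x ∂ν) ^ c * 1 := by
        apply mul_le_mul'
        · apply le_of_eq
          congr 1
          · apply lintegral_congr; intro x
            rw [← ENNReal.rpow_mul, mul_one_div, div_self (ne_of_gt hc0), ENNReal.rpow_one]
          · simp
        · simp only [ENNReal.one_rpow, lintegral_one]
          rw [one_div_one_div]
          exact ENNReal.rpow_le_one hν (by linarith)
    _ = (∫⁻ x, F x ∂ν) ^ c := mul_one _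

/-- monotonicity of `L^p` norms on a sub-probability measure. -/
lemma lp_mono {X : Type*} [MeasurableSpace X] (ν : Measure X)
    (hν : ν Set.univ ≤ 1) {F : X → ℝ≥0∞} (hF : AEMeasurable F ν) {a b : ℝ}
    (ha : 0 < a) (hab : a ≤ b) :
    (∫⁻ x, (F x) ^ a ∂ν) ^ (1/a) ≤ (∫⁻ x, (F x) ^ b ∂ν) ^ (1/b) := by
  rcases eq_or_lt_of_le hab with rfl | hlt
  · exact le_rfl
  have hb : 0 < b := lt_trans ha hlt
  have key : ∫⁻ x, (F x) ^ a ∂ν ≤ (∫⁻ x, (F x) ^ b ∂ν) ^ (a/b) := by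
    have := lintegral_rpow_le_rpow_lintegral ν hν (F := fun x => (F x) ^ b)
      (hF.pow_const b) (c := a/b) (div_pos ha hb) (by rw [div_le_one hb]; exact hab)
    calc ∫⁻ x, (F x) ^ a ∂ν = ∫⁻ x, ((F x) ^ b) ^ (a/b) ∂ν := by
          apply lintegral_congr; intro x
          rw [← ENNReal.rpow_mul, mul_div_assoc', mul_comm, mul_div_assoc,
            div_self (ne_of_gt hb), mul_one]
      _ ≤ (∫⁻ x, (F x) ^ b ∂ν) ^ (a/b) := this
  calc (∫⁻ x, (F x) ^ a ∂ν) ^ (1/a) ≤ ((∫⁻ x, (F x) ^ b ∂ν) ^ (a/b)) ^ (1/a) :=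
        ENNReal.rpow_le_rpow key (by positivity)
    _ = (∫⁻ x, (F x) ^ b ∂ν) ^ (1/b) := by
        rw [← ENNReal.rpow_mul]
        congr 1
        field_simp

lemma poly_le_exp {s c a : ℝ} (hc : 0 < c) (ha : 0 < a) (hs : 0 ≤ s) :
    ∃ M : ℝ, 0 < M ∧ ∀ x : ℝ, 1 ≤ x → x ^ s ≤ M * Real.exp (c * x ^ a) := by
  set m : ℕ := ⌈s / a⌉₊ with hm
  refine ⟨(m.factorial : ℝ) / c ^ m, by positivity, fun x hx => ?_⟩
  have hx0 : (0:ℝ) < x := lt_of_lt_of_le zero_lt_one hx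
  have h1 : x ^ s ≤ x ^ (a * m) := by
    apply Real.rpow_le_rpow_of_exponent_le hx
    calc s = (s / a) * a := by field_simp
      _ ≤ (m : ℝ) * a := by
          apply mul_le_mul_of_nonneg_right (Nat.le_ceil _) (le_of_lt ha)
      _ = a * m := mul_comm _ _
  have h2 : x ^ (a * m) = (x ^ a) ^ m := by
    rw [Real.rpow_mul (le_of_lt hx0), Real.rpow_natCast]
  have h3 : (c * x ^ a) ^ m / (m.factorial : ℝ) ≤ Real.exp (c * x ^ a) := by
    apply Real.pow_div_factorial_le_exp
    positivity
  have hxa : (0:ℝ) < x ^ a := Real.rpow_pos_of_pos hx0 a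
  refine le_trans (h1.trans_eq h2) ?_
  rw [mul_pow] at h3
  rw [div_mul_eq_mul_div, le_div_iff₀ (by positivity : (0:ℝ) < c ^ m)]
  rw [div_le_iff₀ (by positivity : (0:ℝ) < (m.factorial : ℝ))] at h3
  nlinarith [pow_pos hxa m, pow_pos hc m]

lemma exists_tsum_bound {r c a : ℝ} (hr : 0 ≤ r) (hc : 0 < c) (ha : 0 < a) :
    ∃ S : ℝ, 0 ≤ S ∧
      ∑' k : ℕ, ENNReal.ofReal ((((k:ℝ))+1) ^ r * Real.exp (-(c * (k:ℝ) ^ a)))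
        ≤ ENNReal.ofReal S := by
  obtain ⟨M, hM0, hM⟩ := poly_le_exp (s := r + 2) (c := c / 2 ^ a) (a := a)
    (by positivity) ha (by linarith)
  set M' : ℝ := max M 1 with hM'
  have hM'1 : (1:ℝ) ≤ M' := le_max_right _ _
  have hM'0 : (0:ℝ) < M' := lt_of_lt_of_le zero_lt_one hM'1
  set f : ℕ → ℝ := fun k => (((k:ℝ))+1) ^ r * Real.exp (-(c * (k:ℝ) ^ a)) with hf
  have hfnn : ∀ k, 0 ≤ f k := by
    intro k
    apply mul_nonneg _ (le_of_lt (Real.exp_pos _))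
    apply Real.rpow_nonneg
    positivity
  have hbound : ∀ k : ℕ, f k ≤ M' * (1 / ((k:ℝ)+1) ^ 2) := by
    intro k
    have hk1 : (1:ℝ) ≤ (k:ℝ) + 1 := by linarith [Nat.cast_nonneg (α := ℝ) k]
    have hk0 : (0:ℝ) < (k:ℝ) + 1 := by positivity
    have hexp : (0:ℝ) < Real.exp (c * (k:ℝ) ^ a) := Real.exp_pos _
    have hpow2 : (0:ℝ) < ((k:ℝ)+1) ^ 2 := by positivity
    have key : ((k:ℝ)+1) ^ r * ((k:ℝ)+1) ^ 2 ≤ M' * Real.exp (c * (k:ℝ) ^ a) := by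
      rcases Nat.eq_zero_or_pos k with rfl | hk
      · simp only [Nat.cast_zero, zero_add, Real.one_rpow, one_mul, one_pow]
        rw [Real.zero_rpow (ne_of_gt ha), mul_zero, Real.exp_zero, mul_one]
        linarith
      · have h1 : ((k:ℝ)+1) ^ (r+2) ≤ M * Real.exp ((c / 2 ^ a) * ((k:ℝ)+1) ^ a) :=
          hM _ hk1
        have h2 : ((k:ℝ)+1) ^ a ≤ 2 ^ a * (k:ℝ) ^ a := by
          have hkR : (1:ℝ) ≤ (k:ℝ) := by exact_mod_cast hk
          rw [← Real.mul_rpow (by norm_num) (by linarith)]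
          apply Real.rpow_le_rpow (by linarith) (by linarith) (le_of_lt ha)
        have h3 : (c / 2 ^ a) * ((k:ℝ)+1) ^ a ≤ c * (k:ℝ) ^ a := by
          have h2a : (0:ℝ) < (2:ℝ) ^ a := Real.rpow_pos_of_pos (by norm_num) a
          rw [div_mul_eq_mul_div, div_le_iff₀ h2a]
          calc c * ((k:ℝ)+1) ^ a ≤ c * (2 ^ a * (k:ℝ) ^ a) :=
                mul_le_mul_of_nonneg_left h2 (le_of_lt hc)
            _ = c * (k:ℝ) ^ a * 2 ^ a := by ring
        have h5 : ((k:ℝ)+1) ^ (r+2) = ((k:ℝ)+1) ^ r * ((k:ℝ)+1) ^ 2 := by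
          rw [Real.rpow_add hk0]
          congr 1
          rw [show ((2:ℝ)) = ((2:ℕ):ℝ) by norm_num, Real.rpow_natCast]
        calc ((k:ℝ)+1) ^ r * ((k:ℝ)+1) ^ 2 = ((k:ℝ)+1) ^ (r+2) := h5.symm
          _ ≤ M * Real.exp ((c / 2 ^ a) * ((k:ℝ)+1) ^ a) := h1
          _ ≤ M' * Real.exp (c * (k:ℝ) ^ a) :=
              mul_le_mul (le_max_left _ _) (Real.exp_le_exp.mpr h3)
                (le_of_lt (Real.exp_pos _)) (le_of_lt hM'0)
    rw [hf]
    simp only []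
    rw [Real.exp_neg, ← div_eq_mul_inv, mul_one_div, div_le_div_iff₀ hexp hpow2]
    calc ((k:ℝ)+1) ^ r * ((k:ℝ)+1) ^ 2 ≤ M' * Real.exp (c * (k:ℝ) ^ a) := key
      _ = M' * Real.exp (c * (k:ℝ) ^ a) := rfl
  have hg : Summable (fun k : ℕ => M' * (1 / ((k:ℝ)+1) ^ 2)) := by
    apply Summable.mul_left
    have h0 : Summable (fun n : ℕ => 1 / (n:ℝ) ^ 2) :=
      Real.summable_one_div_nat_pow.mpr one_lt_two
    have := (summable_nat_add_iff 1).mpr h0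
    apply this.congr
    intro k
    push_cast
    ring
  have hfsum : Summable f := Summable.of_nonneg_of_le hfnn hbound hg
  refine ⟨∑' k, f k, tsum_nonneg hfnn, ?_⟩
  rw [← ENNReal.ofReal_tsum_of_nonneg hfnn hfsum]

lemma add_rpow_le {a b r : ℝ} (ha : 0 ≤ a) (hb : 0 ≤ b) (hr : 0 ≤ r) :
    (a + b) ^ r ≤ 2 ^ r * (a ^ r + b ^ r) := by
  have hmax : a + b ≤ 2 * max a b := by
    rcases le_total a b with h | h
    · rw [max_eq_right h]; linarith
    · rw [max_eq_left h]; linarith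
  calc (a + b) ^ r ≤ (2 * max a b) ^ r :=
        Real.rpow_le_rpow (by positivity) hmax hr
    _ = 2 ^ r * (max a b) ^ r := Real.mul_rpow (by norm_num) (le_max_of_le_left ha)
    _ ≤ 2 ^ r * (a ^ r + b ^ r) := by
        apply mul_le_mul_of_nonneg_left _ (Real.rpow_nonneg (by norm_num) r)
        rcases le_total a b with h | h
        · rw [max_eq_right h]
          have := Real.rpow_nonneg ha r
          linarith
        · rw [max_eq_left h]
          have := Real.rpow_nonneg hb r
          linarith

lemma moment_core {Ω : Type*} [MeasurableSpace Ω] (P : Measure Ω) [IsProbabilityMeasure P]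
    {X : Ω → ℝ} (hX : Measurable X)
    {G : Set Ω} (hGm : MeasurableSet G) (hG : P Gᶜ = 0)
    (hX0 : ∀ ω ∈ G, 0 ≤ X ω) (hX2 : ∀ ω ∈ G, X ω ≤ 2)
    {r δ c₁ ε₀ a : ℝ} (hr : 1 ≤ r) (hδ0 : 0 < δ) (hδ1 : δ ≤ 1) (hc₁ : 0 < c₁)
    (hε₀ : 0 < ε₀) (ha : 0 < a)
    (tail : ∀ ε : ℝ, 0 < ε → ε ≤ ε₀ →
      P {ω | ε ≤ X ω} ≤ ENNReal.ofReal (Real.exp (-(c₁ * (ε/δ) ^ a))))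
    {S M₂ : ℝ}
    (hS : ∑' k : ℕ, ENNReal.ofReal ((((k:ℝ))+1) ^ r * Real.exp (-((c₁ / 2 ^ a) * (k:ℝ) ^ a)))
        ≤ ENNReal.ofReal S) (hS0 : 0 ≤ S)
    (hM₂ : δ⁻¹ ^ (r+1) * Real.exp (-(c₁ * (ε₀/δ) ^ a)) ≤ M₂) :
    ∫⁻ ω, ENNReal.ofReal (X ω ^ r) ∂P ≤
      ENNReal.ofReal (δ ^ r * (S + 3 ^ (r+1) * M₂)) := by
  have hr0 : (0:ℝ) < r := lt_of_lt_of_le zero_lt_one hr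
  have hM₂0 : 0 ≤ M₂ := le_trans (by positivity) hM₂
  set N : ℕ := ⌊2/δ⌋₊ with hN
  set E : ℝ := Real.exp (-(c₁ * (ε₀/δ) ^ a)) with hE
  have hE0 : 0 < E := Real.exp_pos _
  set A : ℕ → Set Ω := fun k => G ∩ X ⁻¹' (Ico ((k:ℝ)*δ) (((k:ℝ)+1)*δ)) with hA
  have hAm : ∀ k, MeasurableSet (A k) := fun k => hGm.inter (hX measurableSet_Ico)
  have hGsub : G ⊆ ⋃ k, A k := by
    intro ω hω
    have h0 := hX0 ω hω
    refine mem_iUnion.mpr ⟨⌊X ω / δ⌋₊, hω, ?_, ?_⟩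
    · calc ((⌊X ω / δ⌋₊:ℝ)) * δ ≤ (X ω / δ) * δ :=
            mul_le_mul_of_nonneg_right (Nat.floor_le (div_nonneg h0 hδ0.le)) hδ0.le
        _ = X ω := by field_simp
    · have h1 : X ω / δ < (⌊X ω / δ⌋₊:ℝ) + 1 := Nat.lt_floor_add_one _
      calc X ω = (X ω / δ) * δ := by field_simp
        _ < ((⌊X ω / δ⌋₊:ℝ) + 1) * δ := by
            exact mul_lt_mul_of_pos_right h1 hδ0
  set U : ℕ → ℝ≥0∞ := fun k => ENNReal.ofReal (δ ^ r) *
    ENNReal.ofReal ((((k:ℝ))+1) ^ r * Real.exp (-((c₁ / 2 ^ a) * (k:ℝ) ^ a))) with hU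
  set W : ℕ → ℝ≥0∞ := fun k => if k ≤ N then ENNReal.ofReal (3 ^ r * E) else 0 with hW
  have termbound : ∀ k : ℕ, (∫⁻ ω in A k, ENNReal.ofReal (X ω ^ r) ∂P) ≤ U k + W k := by
    intro k
    have stepA : (∫⁻ ω in A k, ENNReal.ofReal (X ω ^ r) ∂P) ≤
        ENNReal.ofReal ((((k:ℝ)+1)*δ) ^ r) * P (A k) := by
      calc (∫⁻ ω in A k, ENNReal.ofReal (X ω ^ r) ∂P) ≤
          ∫⁻ _ in A k, ENNReal.ofReal ((((k:ℝ)+1)*δ) ^ r) ∂P := by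
            apply setLIntegral_mono measurable_const
            intro ω hω
            apply ENNReal.ofReal_le_ofReal
            exact Real.rpow_le_rpow (hX0 ω hω.1) (le_of_lt hω.2.2) (le_of_lt hr0)
        _ = ENNReal.ofReal ((((k:ℝ)+1)*δ) ^ r) * P (A k) := setLIntegral_const _ _
    rcases Nat.eq_zero_or_pos k with rfl | hk
    · refine le_trans (le_trans stepA ?_) le_self_add
      have : U 0 = ENNReal.ofReal (δ ^ r) := by
        rw [hU]
        simp only [Nat.cast_zero, zero_add, Real.one_rpow, one_mul]
        rw [Real.zero_rpow (ne_of_gt ha), mul_zero, neg_zero, Real.exp_zero,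
          ENNReal.ofReal_one, mul_one]
      rw [this]
      simp only [Nat.cast_zero, zero_add, one_mul]
      calc ENNReal.ofReal (δ ^ r) * P (A 0) ≤ ENNReal.ofReal (δ ^ r) * 1 :=
            mul_le_mul_right prob_le_one _
        _ = ENNReal.ofReal (δ ^ r) := mul_one _
    · have hk1 : (1:ℝ) ≤ (k:ℝ) := by exact_mod_cast hk
      have hkδ0 : 0 < (k:ℝ) * δ := by positivity
      by_cases h2 : (k:ℝ) * δ ≤ 2
      · by_cases h3 : (k:ℝ) * δ / 2 ≤ ε₀
        · -- main regime
          have hsub : A k ⊆ {ω | (k:ℝ) * δ / 2 ≤ X ω} := by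
            intro ω hω
            have := hω.2.1
            simp only [mem_setOf_eq]
            linarith
          have htail := tail ((k:ℝ) * δ / 2) (by positivity) h3
          have hPA : P (A k) ≤ ENNReal.ofReal (Real.exp (-((c₁ / 2 ^ a) * (k:ℝ) ^ a))) := by
            refine le_trans (measure_mono hsub) (le_trans htail (le_of_eq ?_))
            congr 1
            have hδne : δ ≠ 0 := ne_of_gt hδ0
            have : ((k:ℝ) * δ / 2 / δ) = (k:ℝ) / 2 := by field_simp
            rw [this, Real.div_rpow (by positivity) (by norm_num)]
            ring
          refine le_trans (le_trans stepA ?_) le_self_add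
          calc ENNReal.ofReal ((((k:ℝ)+1)*δ) ^ r) * P (A k) ≤
              ENNReal.ofReal ((((k:ℝ)+1)*δ) ^ r) *
                ENNReal.ofReal (Real.exp (-((c₁ / 2 ^ a) * (k:ℝ) ^ a))) :=
                mul_le_mul_right hPA _
            _ = U k := by
                simp only [hU]
                rw [← ENNReal.ofReal_mul (by positivity), ← ENNReal.ofReal_mul (by positivity)]
                congr 1
                rw [Real.mul_rpow (by positivity) hδ0.le]
                ring
        · -- large deviation regime
          push_neg at h3
          have hsub : A k ⊆ {ω | ε₀ ≤ X ω} := by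
            intro ω hω
            have := hω.2.1
            simp only [mem_setOf_eq]
            nlinarith
          have hPA : P (A k) ≤ ENNReal.ofReal E := le_trans (measure_mono hsub)
            (tail ε₀ hε₀ le_rfl)
          have hkN : k ≤ N := by
            apply Nat.le_floor
            rw [le_div_iff₀ hδ0]
            exact h2
          have hWk : W k = ENNReal.ofReal (3 ^ r * E) := if_pos hkN
          refine le_trans (le_trans stepA ?_) le_add_self
          rw [hWk]
          calc ENNReal.ofReal ((((k:ℝ)+1)*δ) ^ r) * P (A k) ≤
              ENNReal.ofReal ((((k:ℝ)+1)*δ) ^ r) * ENNReal.ofReal E :=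
              mul_le_mul_right hPA _
            _ ≤ ENNReal.ofReal (3 ^ r) * ENNReal.ofReal E := by
                apply mul_le_mul_left
                apply ENNReal.ofReal_le_ofReal
                apply Real.rpow_le_rpow (by positivity) _ (le_of_lt hr0)
                nlinarith
            _ = ENNReal.ofReal (3 ^ r * E) := by
                rw [← ENNReal.ofReal_mul (by positivity)]
      · -- empty regime
        have hempty : P (A k) = 0 := by
          apply measure_mono_null _ (measure_empty (μ := P))
          · intro ω hω
            exfalso
            have hb := hX2 ω hω.1
            have := hω.2.1
            push_neg at h2
            linarith
        refine le_trans (le_trans stepA (le_of_eq ?_)) (zero_le)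
        rw [hempty, mul_zero]
  have main : (∫⁻ ω, ENNReal.ofReal (X ω ^ r) ∂P) ≤ ∑' k, (U k + W k) := by
    calc (∫⁻ ω, ENNReal.ofReal (X ω ^ r) ∂P) =
        (∫⁻ ω in G, ENNReal.ofReal (X ω ^ r) ∂P) +
          (∫⁻ ω in Gᶜ, ENNReal.ofReal (X ω ^ r) ∂P) :=
          (lintegral_add_compl _ hGm).symm
      _ = (∫⁻ ω in G, ENNReal.ofReal (X ω ^ r) ∂P) := by
          rw [Measure.restrict_eq_zero.mpr hG, lintegral_zero_measure, add_zero]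
      _ ≤ (∫⁻ ω in ⋃ k, A k, ENNReal.ofReal (X ω ^ r) ∂P) := lintegral_mono_set hGsub
      _ ≤ ∑' k, (∫⁻ ω in A k, ENNReal.ofReal (X ω ^ r) ∂P) := lintegral_iUnion_le _ _
      _ ≤ ∑' k, (U k + W k) := ENNReal.tsum_le_tsum termbound
  have hsumU : ∑' k, U k ≤ ENNReal.ofReal (δ ^ r * S) := by
    rw [hU, ENNReal.tsum_mul_left, ENNReal.ofReal_mul (by positivity)]
    exact mul_le_mul_right hS _
  have hsumW : ∑' k, W k ≤ ENNReal.ofReal (δ ^ r * (3 ^ (r+1) * M₂)) := by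
    have h1 : ∑' k, W k = ((N+1 : ℕ) : ℝ≥0∞) * ENNReal.ofReal (3 ^ r * E) := by
      rw [tsum_eq_sum (s := Finset.range (N+1)) (fun k hk => by
        rw [hW]
        simp only
        rw [if_neg]
        intro hle
        exact hk (Finset.mem_range.mpr (Nat.lt_succ_of_le hle)))]
      rw [Finset.sum_congr rfl (fun k hk => show W k = ENNReal.ofReal (3 ^ r * E) from
        if_pos (Nat.lt_succ_iff.mp (Finset.mem_range.mp hk)))]
      rw [Finset.sum_const, Finset.card_range, nsmul_eq_mul]
    rw [h1, ← ENNReal.ofReal_natCast, ← ENNReal.ofReal_mul (by positivity)]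
    apply ENNReal.ofReal_le_ofReal
    have hNle : ((N+1:ℕ):ℝ) ≤ 3 / δ := by
      push_cast
      have h2 : (N:ℝ) ≤ 2/δ := Nat.floor_le (by positivity)
      have h3 : (1:ℝ) ≤ 1/δ := by
        rw [le_div_iff₀ hδ0]; linarith
      calc (N:ℝ) + 1 ≤ 2/δ + 1/δ := add_le_add h2 h3
        _ = 3 / δ := by ring
    have hkey : (3 / δ) * (3 ^ r * E) = δ ^ r * (3 ^ (r+1) * (δ⁻¹ ^ (r+1) * E)) := by
      have e1 : δ⁻¹ ^ (r+1) = (δ ^ (r+1))⁻¹ := Real.inv_rpow hδ0.le _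
      have e2 : δ ^ (r+1) = δ ^ r * δ := by
        rw [Real.rpow_add hδ0, Real.rpow_one]
      have e3 : (3:ℝ) ^ (r+1) = 3 ^ r * 3 := by
        rw [Real.rpow_add (by norm_num : (0:ℝ) < 3), Real.rpow_one]
      have hδr : (0:ℝ) < δ ^ r := Real.rpow_pos_of_pos hδ0 r
      rw [e1, e2, e3]
      field_simp
    calc ((N+1:ℕ):ℝ) * (3 ^ r * E) ≤ (3/δ) * (3 ^ r * E) :=
          mul_le_mul_of_nonneg_right hNle (by positivity)
      _ = δ ^ r * (3 ^ (r+1) * (δ⁻¹ ^ (r+1) * E)) := hkey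
      _ ≤ δ ^ r * (3 ^ (r+1) * M₂) := by
          apply mul_le_mul_of_nonneg_left _ (by positivity)
          apply mul_le_mul_of_nonneg_left hM₂ (by positivity)
  calc (∫⁻ ω, ENNReal.ofReal (X ω ^ r) ∂P) ≤ ∑' k, (U k + W k) := main
    _ = (∑' k, U k) + (∑' k, W k) := ENNReal.tsum_add
    _ ≤ ENNReal.ofReal (δ ^ r * S) + ENNReal.ofReal (δ ^ r * (3 ^ (r+1) * M₂)) :=
        add_le_add hsumU hsumW
    _ = ENNReal.ofReal (δ ^ r * (S + 3 ^ (r+1) * M₂)) := by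
        rw [← ENNReal.ofReal_add (by positivity) (by positivity)]
        congr 1
        ring

lemma lpNorm_eq {d : ℕ} {p : ℝ} (hp : 0 < p) {h : Euc d → ℝ} (hc : Continuous h)
    (h0 : ∀ u, 0 ≤ h u) :
    lpNorm d p h = ((∫⁻ u, (ENNReal.ofReal (h u)) ^ p ∂(sphereσ d)).toReal) ^ (1/p) := by
  rw [_root_.lpNorm]
  congr 1
  rw [MeasureTheory.integral_eq_lintegral_of_nonneg_ae
    (Filter.Eventually.of_forall fun u => by positivity)
    ((hc.abs.rpow_const (fun x => Or.inr hp.le)).aestronglyMeasurable)]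
  congr 1
  apply lintegral_congr
  intro u
  rw [abs_of_nonneg (h0 u), ← ENNReal.ofReal_rpow_of_nonneg (h0 u) hp.le]

lemma step1 {d : ℕ} {p q r : ℝ} (hp : 1 ≤ p) (hq0 : 0 ≤ q) (hr : 1 ≤ r) (hpr : p ≤ r)
    {f g : Euc d → ℝ} (hf : Continuous f) (hg : Continuous g)
    (hf0 : ∀ u, 0 ≤ f u) (hg0 : ∀ u, 0 ≤ g u) (hgf : ∀ u, g u ≤ f u)
    (hf2 : ∀ u, ‖u‖ = 1 → f u ≤ 2) :
    ENNReal.ofReal (|lpNorm d p f - lpNorm d p g| ^ q) ≤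
      (∫⁻ u, ENNReal.ofReal ((f u - g u) ^ r) ∂(sphereσ d)) ^ (q/r) := by
  have hp0 : (0:ℝ) < p := lt_of_lt_of_le zero_lt_one hp
  have hr0 : (0:ℝ) < r := lt_of_lt_of_le zero_lt_one hr
  set σ := sphereσ d with hσ
  have hσ1 : σ Set.univ ≤ 1 := sphereσ_univ_le d
  have aesph := ae_sphere d
  set φ : Euc d → ℝ≥0∞ := fun u => ENNReal.ofReal (f u) with hφ
  set ψ : Euc d → ℝ≥0∞ := fun u => ENNReal.ofReal (g u) with hψ
  set θ : Euc d → ℝ≥0∞ := fun u => ENNReal.ofReal (f u - g u) with hθ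
  have hφm : Measurable φ := hf.measurable.ennreal_ofReal
  have hψm : Measurable ψ := hg.measurable.ennreal_ofReal
  have hθm : Measurable θ := (hf.sub hg).measurable.ennreal_ofReal
  set A := ∫⁻ u, (φ u) ^ p ∂σ with hA
  set B := ∫⁻ u, (ψ u) ^ p ∂σ with hB
  set Cp := ∫⁻ u, (θ u) ^ p ∂σ with hCp
  set Ir := ∫⁻ u, (θ u) ^ r ∂σ with hIr
  -- finiteness bounds
  have bound_gen : ∀ (F : Euc d → ℝ≥0∞) (s : ℝ), 0 ≤ s →
      (∀ᵐ u ∂σ, F u ≤ ENNReal.ofReal 2) → (∫⁻ u, (F u) ^ s ∂σ) ≤ (ENNReal.ofReal 2) ^ s := by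
    intro F s hs hFle
    calc (∫⁻ u, (F u) ^ s ∂σ) ≤ ∫⁻ _, (ENNReal.ofReal 2) ^ s ∂σ := by
          apply lintegral_mono_ae
          filter_upwards [hFle] with u hu
          exact ENNReal.rpow_le_rpow hu hs
      _ = (ENNReal.ofReal 2) ^ s * σ Set.univ := lintegral_const _
      _ ≤ (ENNReal.ofReal 2) ^ s * 1 := mul_le_mul_right hσ1 _
      _ = (ENNReal.ofReal 2) ^ s := mul_one _
  have hφle : ∀ᵐ u ∂σ, φ u ≤ ENNReal.ofReal 2 := by
    filter_upwards [aesph] with u hu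
    exact ENNReal.ofReal_le_ofReal (hf2 u hu)
  have hθle : ∀ᵐ u ∂σ, θ u ≤ ENNReal.ofReal 2 := by
    filter_upwards [aesph] with u hu
    apply ENNReal.ofReal_le_ofReal
    have := hg0 u; have := hf2 u hu; linarith
  have hAtop : A ≠ ⊤ := by
    refine ne_top_of_le_ne_top ?_ (bound_gen φ p hp0.le hφle)
    exact (ENNReal.rpow_lt_top_of_nonneg hp0.le ENNReal.ofReal_ne_top).ne
  have hψle : ∀ᵐ u ∂σ, ψ u ≤ ENNReal.ofReal 2 := by
    filter_upwards [hφle] with u hu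
    exact le_trans (ENNReal.ofReal_le_ofReal (hgf u)) hu
  have hBtop : B ≠ ⊤ :=
    ne_top_of_le_ne_top (ENNReal.rpow_lt_top_of_nonneg hp0.le ENNReal.ofReal_ne_top).ne
      (bound_gen ψ p hp0.le hψle)
  have hCtop : Cp ≠ ⊤ := by
    refine ne_top_of_le_ne_top ?_ (bound_gen θ p hp0.le hθle)
    exact (ENNReal.rpow_lt_top_of_nonneg hp0.le ENNReal.ofReal_ne_top).ne
  have hIrtop : Ir ≠ ⊤ := by
    refine ne_top_of_le_ne_top ?_ (bound_gen θ r hr0.le hθle)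
    exact (ENNReal.rpow_lt_top_of_nonneg hr0.le ENNReal.ofReal_ne_top).ne
  -- Minkowski
  have hmink : A ^ (1/p) ≤ B ^ (1/p) + Cp ^ (1/p) := by
    have hsum : (fun u => ψ u + θ u) = φ := by
      funext u
      rw [hψ, hθ, hφ, ← ENNReal.ofReal_add (hg0 u) (by linarith [hgf u])]
      congr 1
      ring
    have := ENNReal.lintegral_Lp_add_le (μ := σ) hψm.aemeasurable hθm.aemeasurable hp
      (f := ψ) (g := θ)
    calc A ^ (1/p) = (∫⁻ u, (ψ u + θ u) ^ p ∂σ) ^ (1/p) := by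
          rw [hA]
          congr 1
          apply lintegral_congr
          intro u
          rw [show ψ u + θ u = φ u from congrFun hsum u]
      _ ≤ B ^ (1/p) + Cp ^ (1/p) := by simpa using this
  -- norms
  have hlpf : lpNorm d p f = (A ^ (1/p)).toReal := by
    rw [lpNorm_eq hp0 hf hf0, ENNReal.toReal_rpow]
  have hlpg : lpNorm d p g = (B ^ (1/p)).toReal := by
    rw [lpNorm_eq hp0 hg hg0, ENNReal.toReal_rpow]
  have hBA : B ≤ A := by
    apply lintegral_mono
    intro u
    exact ENNReal.rpow_le_rpow (ENNReal.ofReal_le_ofReal (hgf u)) hp0.le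
  have hmono : lpNorm d p g ≤ lpNorm d p f := by
    rw [hlpf, hlpg]
    apply ENNReal.toReal_mono
    · exact (ENNReal.rpow_lt_top_of_nonneg (by positivity) hAtop).ne
    · exact ENNReal.rpow_le_rpow hBA (by positivity)
  have hdiff : |lpNorm d p f - lpNorm d p g| ≤ ((Ir ^ (1/r)).toReal) := by
    rw [abs_of_nonneg (by linarith)]
    have h1 : (A ^ (1/p)).toReal ≤ (B ^ (1/p)).toReal + (Cp ^ (1/p)).toReal := by
      rw [← ENNReal.toReal_add
        ((ENNReal.rpow_lt_top_of_nonneg (by positivity) hBtop).ne)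
        ((ENNReal.rpow_lt_top_of_nonneg (by positivity) hCtop).ne)]
      apply ENNReal.toReal_mono
      · exact (ENNReal.add_ne_top.mpr ⟨(ENNReal.rpow_lt_top_of_nonneg (by positivity) hBtop).ne,
          (ENNReal.rpow_lt_top_of_nonneg (by positivity) hCtop).ne⟩)
      · exact hmink
    have h2 : Cp ^ (1/p) ≤ Ir ^ (1/r) :=
      lp_mono σ hσ1 hθm.aemeasurable hp0 hpr
    have h3 : (Cp ^ (1/p)).toReal ≤ (Ir ^ (1/r)).toReal := by
      apply ENNReal.toReal_mono
      · exact (ENNReal.rpow_lt_top_of_nonneg (by positivity) hIrtop).ne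
      · exact h2
    rw [hlpf, hlpg]
    linarith
  have hIreq : Ir = ∫⁻ u, ENNReal.ofReal ((f u - g u) ^ r) ∂σ := by
    rw [hIr]
    apply lintegral_congr
    intro u
    rw [ENNReal.ofReal_rpow_of_nonneg (by linarith [hgf u]) hr0.le]
  calc ENNReal.ofReal (|lpNorm d p f - lpNorm d p g| ^ q) ≤
      ENNReal.ofReal (((Ir ^ (1/r)).toReal) ^ q) :=
        ENNReal.ofReal_le_ofReal (Real.rpow_le_rpow (abs_nonneg _) hdiff hq0)
    _ = Ir ^ (q/r) := by
        rw [ENNReal.toReal_rpow, ← ENNReal.rpow_mul, ENNReal.ofReal_toReal]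
        · congr 1
          rw [one_div, inv_mul_eq_div]
        · exact (ENNReal.rpow_lt_top_of_nonneg (by positivity) hIrtop).ne
    _ = (∫⁻ u, ENNReal.ofReal ((f u - g u) ^ r) ∂σ) ^ (q/r) := by rw [hIreq]
end Stmt5Aux

set_option maxHeartbeats 2000000 in
open Stmt5Aux in
theorem stmt5 (d : ℕ) (hd : 1 ≤ d) (α L ε₀ : ℝ) (hα : 0 < α) (hL : 0 < L)
    (hε₀ : 0 < ε₀) (hε₀1 : ε₀ ≤ 1) (p q : ℝ) (hp : 1 ≤ p) (hq : 1 ≤ q) :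
    ∃ C > (0:ℝ), ∀ n : ℕ, 1 ≤ n →
      ∀ (μ : Measure (Euc d)) (K : Set (Euc d)), MemM α L ε₀ μ K →
        ∫⁻ ω, ENNReal.ofReal
            (|lpNorm d p (fun u => suppFn K u + suppFn K (-u))
              - lpNorm d p (fun u => suppFn (hullOf ω) u + suppFn (hullOf ω) (-u))| ^ q)
          ∂(jointLaw n μ)
          ≤ ENNReal.ofReal (C * (n : ℝ) ^ (-(q/α))) := by
  classical
  set r : ℝ := max p q with hrdef
  have hr1 : (1:ℝ) ≤ r := le_trans hp (le_max_left _ _)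
  have hr0 : (0:ℝ) < r := lt_of_lt_of_le zero_lt_one hr1
  have hpr : p ≤ r := le_max_left _ _
  have hqr : q ≤ r := le_max_right _ _
  have hq0 : (0:ℝ) < q := lt_of_lt_of_le zero_lt_one hq
  set c₁ : ℝ := L / 2 ^ α with hc₁def
  have h2α : (0:ℝ) < 2 ^ α := Real.rpow_pos_of_pos two_pos α
  have hc₁ : 0 < c₁ := div_pos hL h2α
  obtain ⟨S, hS0, hS⟩ := exists_tsum_bound (r := r) (c := c₁ / 2 ^ α) (a := α)
    (by linarith) (by positivity) hα
  obtain ⟨M₂, hM₂0, hM₂f⟩ := poly_le_exp (s := (r+1)/α) (c := c₁ * ε₀ ^ α) (a := 1)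
    (by positivity) one_pos (by positivity)
  set Cm : ℝ := S + 3 ^ (r+1) * M₂ with hCmdef
  have hCm0 : 0 ≤ Cm := by positivity
  set Cfin : ℝ := max 1 ((2 ^ (r+1) * Cm) ^ (q/r)) with hCfindef
  refine ⟨Cfin, lt_of_lt_of_le zero_lt_one (le_max_left _ _), ?_⟩
  intro n hn μ K hM
  obtain ⟨hprob, ⟨hconv, hcomp, hint⟩, hK1, hsupp, hcap⟩ := hM
  haveI := hprob
  haveI : IsProbabilityMeasure (jointLaw n μ) := by
    rw [jointLaw]; infer_instance
  have hK0 : K.Nonempty := hint.mono interior_subset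
  have hKm : MeasurableSet K := hcomp.isClosed.measurableSet
  have hne : (Finset.univ : Finset (Fin n)).Nonempty := ⟨⟨0, hn⟩, Finset.mem_univ _⟩
  have hn1 : (1:ℝ) ≤ (n:ℝ) := by exact_mod_cast hn
  have hn0 : (0:ℝ) < (n:ℝ) := by linarith
  set P := jointLaw n μ with hP
  set δ : ℝ := (n:ℝ) ^ (-(1/α)) with hδdef
  have hδ0 : 0 < δ := Real.rpow_pos_of_pos hn0 _
  have hδ1 : δ ≤ 1 := Real.rpow_le_one_of_one_le_of_nonpos hn1
    (neg_nonpos.mpr (by positivity))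
  have hδα : δ ^ α = (n:ℝ)⁻¹ := by
    rw [hδdef, ← Real.rpow_mul hn0.le, show -(1/α) * α = -1 by field_simp,
      Real.rpow_neg_one]
  -- the good event
  set Gd : Set (Fin n → Euc d) := Set.univ.pi (fun _ => K) with hGddef
  have hGdm : MeasurableSet Gd := MeasurableSet.univ_pi (fun _ => hKm)
  have hGdnull : P Gdᶜ = 0 := by
    have hsub2 : Gdᶜ ⊆ ⋃ i, (fun ω : Fin n → Euc d => ω i) ⁻¹' Kᶜ := by
      intro ω hω
      rw [mem_compl_iff, hGddef, Set.mem_pi] at hω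
      push_neg at hω
      obtain ⟨i, -, hi⟩ := hω
      exact mem_iUnion.mpr ⟨i, hi⟩
    refine measure_mono_null hsub2 (measure_iUnion_null fun i => ?_)
    have hpre : (fun ω : Fin n → Euc d => ω i) ⁻¹' Kᶜ =
        Set.univ.pi (fun j => if j = i then Kᶜ else Set.univ) := by
      ext ω
      simp only [Set.mem_preimage, Set.mem_pi, Set.mem_univ, forall_true_left]
      constructor
      · intro h j
        by_cases hj : j = i
        · subst hj; simp [h]
        · simp [hj]
      · intro h
        have := h i
        simpa using this
    rw [hpre, hP, jointLaw, Measure.pi_pi]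
    have hμK : μ Kᶜ = 0 :=
      measure_mono_null (compl_subset_compl.mpr hsupp) (measure_compl_measSupp μ)
    calc ∏ j, μ (if j = i then Kᶜ else Set.univ)
        = ∏ j, (if j = i then μ Kᶜ else 1) := by
          apply Finset.prod_congr rfl
          intro j _
          split_ifs <;> simp [measure_univ]
      _ = μ Kᶜ := by rw [Finset.prod_ite_eq' Finset.univ i (fun _ => μ Kᶜ)]; simp
      _ = 0 := hμK
  have haeGd : ∀ᵐ ω ∂P, ω ∈ Gd := by
    rw [MeasureTheory.ae_iff]
    exact hGdnull
  -- max functional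
  set Gm : (Fin n → Euc d) → Euc d → ℝ :=
    fun ω u => Finset.univ.sup' hne (fun i => (inner ℝ u (ω i) : ℝ)) with hGmdef
  have hGmcont : Continuous (fun z : (Fin n → Euc d) × Euc d => Gm z.1 z.2) := by
    simp only [hGmdef]
    exact continuous_gmax hne
  have hGm_le : ∀ ω ∈ Gd, ∀ u : Euc d, Gm ω u ≤ suppFn K u := by
    intro ω hω u
    apply Finset.sup'_le
    intro i _
    exact le_suppFn hK1 (hω i (Set.mem_univ i)) u
  have hGm_ge : ∀ (ω : Fin n → Euc d) (u : Euc d) (i : Fin n),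
      (inner ℝ u (ω i) : ℝ) ≤ Gm ω u := by
    intro ω u i
    simp only [hGmdef]
    exact Finset.le_sup' (fun j => (inner ℝ u (ω j) : ℝ)) (Finset.mem_univ i)
  -- per-direction deviation function
  set X : Euc d → (Fin n → Euc d) → ℝ := fun v ω => suppFn K v - Gm ω v with hXdef
  have hXcont : ∀ v, Continuous (X v) := by
    intro v
    simp only [hXdef, hGmdef]
    exact continuous_const.sub (continuous_gmax_left hne v)
  have hX0 : ∀ v, ∀ ω ∈ Gd, 0 ≤ X v ω := by
    intro v ω hω
    have := hGm_le ω hω v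
    simp only [hXdef]
    linarith
  have hX2 : ∀ v, ‖v‖ = 1 → ∀ ω ∈ Gd, X v ω ≤ 2 := by
    intro v hv ω hω
    have h1 : suppFn K v ≤ 1 := by
      have := suppFn_le_norm hK0 hK1 v
      rwa [hv] at this
    have h2 : (-1:ℝ) ≤ Gm ω v := by
      refine le_trans ?_ (hGm_ge ω v ⟨0, hn⟩)
      have h3 : |(inner ℝ v (ω ⟨0, hn⟩) : ℝ)| ≤ ‖v‖ * ‖ω ⟨0, hn⟩‖ := abs_real_inner_le_norm _ _
      have h4 : ‖ω ⟨0, hn⟩‖ ≤ 1 := by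
        have := hK1 (hω ⟨0, hn⟩ (Set.mem_univ _))
        rwa [mem_closedBall, dist_zero_right] at this
      rw [hv, one_mul] at h3
      have := abs_le.mp (le_trans h3 h4)
      linarith [this.1]
    simp only [hXdef]
    linarith
  -- tail bound
  have tailv : ∀ v : Euc d, ‖v‖ = 1 → ∀ ε : ℝ, 0 < ε → ε ≤ ε₀ →
      P {ω | ε ≤ X v ω} ≤ ENNReal.ofReal (Real.exp (-(c₁ * (ε/δ) ^ α))) := by
    intro v hv ε hε hεε₀
    have hcapmeas : MeasurableSet (cap K v (ε/2)) := by
      have : cap K v (ε/2) = K ∩ {x | suppFn K v - ε/2 ≤ (inner ℝ v x : ℝ)} := by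
        ext x; simp [cap]
      rw [this]
      refine hKm.inter (measurableSet_le measurable_const ?_)
      exact (continuous_const.inner continuous_id).measurable
    have hsub : {ω | ε ≤ X v ω} ⊆ Set.univ.pi (fun _ : Fin n => (cap K v (ε/2))ᶜ) := by
      intro ω hω
      rw [Set.mem_pi]
      intro i _
      rw [mem_compl_iff]
      intro hmem
      obtain ⟨hKi, hge⟩ := hmem
      have h1 := hGm_ge ω v i
      have h3 : ε ≤ suppFn K v - Gm ω v := by
        have h4 : ε ≤ X v ω := hω
        simpa only [hXdef] using h4
      linarith
    have hccompl : μ (cap K v (ε/2))ᶜ ≤ ENNReal.ofReal (Real.exp (-(L * (ε/2) ^ α))) := by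
      rw [prob_compl_eq_one_sub hcapmeas]
      have h1 : ENNReal.ofReal (L * (ε/2) ^ α) ≤ μ (cap K v (ε/2)) :=
        hcap v hv (ε/2) ⟨by positivity, by linarith⟩
      calc (1:ℝ≥0∞) - μ (cap K v (ε/2)) ≤ 1 - ENNReal.ofReal (L * (ε/2) ^ α) :=
            tsub_le_tsub_left h1 1
        _ = ENNReal.ofReal (1 - L * (ε/2) ^ α) := by
            rw [← ENNReal.ofReal_one, ← ENNReal.ofReal_sub _ (by positivity)]
        _ ≤ ENNReal.ofReal (Real.exp (-(L * (ε/2) ^ α))) := by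
            apply ENNReal.ofReal_le_ofReal
            have := Real.add_one_le_exp (-(L * (ε/2) ^ α))
            linarith
    calc P {ω | ε ≤ X v ω} ≤ P (Set.univ.pi (fun _ : Fin n => (cap K v (ε/2))ᶜ)) :=
          measure_mono hsub
      _ = (μ (cap K v (ε/2))ᶜ) ^ n := by
          rw [hP, jointLaw, Measure.pi_pi, Finset.prod_const, Finset.card_univ,
            Fintype.card_fin]
      _ ≤ (ENNReal.ofReal (Real.exp (-(L * (ε/2) ^ α)))) ^ n := pow_le_pow_left' hccompl n
      _ = ENNReal.ofReal (Real.exp (-(L * (ε/2) ^ α)) ^ n) :=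
          (ENNReal.ofReal_pow (le_of_lt (Real.exp_pos _)) n).symm
      _ = ENNReal.ofReal (Real.exp (-(c₁ * (ε/δ) ^ α))) := by
          congr 1
          rw [← Real.exp_nat_mul]
          congr 1
          have e1 : (ε/2) ^ α = ε ^ α / 2 ^ α := Real.div_rpow hε.le (by norm_num : (0:ℝ) ≤ 2) α
          have e2 : (ε/δ) ^ α = ε ^ α * n := by
            rw [Real.div_rpow hε.le hδ0.le, hδα, div_eq_mul_inv, inv_inv]
          rw [e1, e2, hc₁def]
          field_simp
  -- moment bound
  have hM₂' : δ⁻¹ ^ (r+1) * Real.exp (-(c₁ * (ε₀/δ) ^ α)) ≤ M₂ := by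
    have e2 : (ε₀/δ) ^ α = ε₀ ^ α * n := by
      rw [Real.div_rpow hε₀.le hδ0.le, hδα, div_eq_mul_inv, inv_inv]
    have e3 : δ⁻¹ ^ (r+1) = (n:ℝ) ^ ((r+1)/α) := by
      have : δ⁻¹ = (n:ℝ) ^ (1/α) := by
        rw [hδdef, ← Real.rpow_neg_one, ← Real.rpow_mul (by positivity)]
        congr 1
        ring
      rw [this, ← Real.rpow_mul (by positivity)]
      congr 1
      field_simp
    have hpoly := hM₂f (n:ℝ) hn1
    rw [Real.rpow_one] at hpoly
    rw [e2, e3, Real.exp_neg, ← div_eq_mul_inv,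
      div_le_iff₀ (Real.exp_pos _)]
    calc (n:ℝ) ^ ((r+1)/α) ≤ M₂ * Real.exp (c₁ * ε₀ ^ α * (n:ℝ)) := hpoly
      _ = M₂ * Real.exp (c₁ * (ε₀ ^ α * (n:ℝ))) := by rw [mul_assoc]
  have momentv : ∀ v : Euc d, ‖v‖ = 1 →
      (∫⁻ ω, ENNReal.ofReal ((X v ω) ^ r) ∂P) ≤ ENNReal.ofReal (δ ^ r * Cm) := by
    intro v hv
    exact moment_core P (hXcont v).measurable hGdm hGdnull (hX0 v) (hX2 v hv)
      hr1 hδ0 hδ1 hc₁ hε₀ hα (tailv v hv) hS hS0 hM₂'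
  -- the functions f and g
  set fK : Euc d → ℝ := fun u => suppFn K u + suppFn K (-u) with hfKdef
  set gfn : (Fin n → Euc d) → Euc d → ℝ := fun ω u => Gm ω u + Gm ω (-u) with hgfndef
  have hfKcont : Continuous fK :=
    (continuous_suppFn hK0 hK1).add ((continuous_suppFn hK0 hK1).comp continuous_neg)
  have hfK0 : ∀ u, 0 ≤ fK u := suppFn_nonneg_two hK0 hK1
  have hfK2 : ∀ u, ‖u‖ = 1 → fK u ≤ 2 := by
    intro u hu
    have h1 := suppFn_le_norm hK0 hK1 u
    have h2 := suppFn_le_norm hK0 hK1 (-u)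
    rw [hu] at h1
    rw [norm_neg, hu] at h2
    simp only [hfKdef]
    linarith
  have hgcont : ∀ ω, Continuous (gfn ω) := by
    intro ω
    simp only [hgfndef, hGmdef]
    exact (continuous_gmax_right hne ω).add (continuous_gmax_right_neg hne ω)
  have hg0 : ∀ ω u, 0 ≤ gfn ω u := by
    intro ω u
    have h1 := hGm_ge ω u ⟨0, hn⟩
    have h2 := hGm_ge ω (-u) ⟨0, hn⟩
    have h3 : (inner ℝ (-u) (ω ⟨0, hn⟩) : ℝ) = -(inner ℝ u (ω ⟨0, hn⟩) : ℝ) := inner_neg_left _ _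
    simp only [hgfndef]
    linarith
  have hgf : ∀ ω ∈ Gd, ∀ u, gfn ω u ≤ fK u := by
    intro ω hω u
    have h1 := hGm_le ω hω u
    have h2 := hGm_le ω hω (-u)
    simp only [hgfndef, hfKdef]
    linarith
  -- joint measurability
  have hjointcont : Continuous (fun z : (Fin n → Euc d) × Euc d => fK z.2 - gfn z.1 z.2) := by
    simp only [hgfndef, hGmdef]
    apply Continuous.sub
    · exact hfKcont.comp continuous_snd
    · exact (continuous_gmax hne).add (continuous_gmax_neg hne)
  have hjoint : Measurable (fun z : (Fin n → Euc d) × Euc d =>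
      ENNReal.ofReal ((fK z.2 - gfn z.1 z.2) ^ r)) := by
    apply Measurable.ennreal_ofReal
    exact (hjointcont.rpow_const (fun z => Or.inr hr0.le)).measurable
  set Ibar : (Fin n → Euc d) → ℝ≥0∞ :=
    fun ω => ∫⁻ u, ENNReal.ofReal ((fK u - gfn ω u) ^ r) ∂(sphereσ d) with hIbardef
  have hIbarmeas : Measurable Ibar := Measurable.lintegral_prod_right' hjoint
  -- per-direction bound integrated over the sphere
  have hswap : (∫⁻ ω, Ibar ω ∂P) ≤ ENNReal.ofReal (2 ^ (r+1) * (δ ^ r * Cm)) := by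
    have hsw : (∫⁻ ω, Ibar ω ∂P) =
        ∫⁻ u, (∫⁻ ω, ENNReal.ofReal ((fK u - gfn ω u) ^ r) ∂P) ∂(sphereσ d) :=
      lintegral_lintegral_swap hjoint.aemeasurable
    rw [hsw]
    have hinner : ∀ u : Euc d, ‖u‖ = 1 →
        (∫⁻ ω, ENNReal.ofReal ((fK u - gfn ω u) ^ r) ∂P) ≤
          ENNReal.ofReal (2 ^ (r+1) * (δ ^ r * Cm)) := by
      intro u hu
      have hneg : ‖-u‖ = 1 := by rw [norm_neg]; exact hu
      have hptwise : ∀ᵐ ω ∂P, ENNReal.ofReal ((fK u - gfn ω u) ^ r) ≤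
          ENNReal.ofReal (2 ^ r * (X u ω) ^ r) + ENNReal.ofReal (2 ^ r * (X (-u) ω) ^ r) := by
        filter_upwards [haeGd] with ω hω
        have hXu0 := hX0 u ω hω
        have hXn0 := hX0 (-u) ω hω
        have hsplit : fK u - gfn ω u = X u ω + X (-u) ω := by
          simp only [hfKdef, hgfndef, hXdef]
          ring
        rw [hsplit, ← ENNReal.ofReal_add (by positivity) (by positivity)]
        apply ENNReal.ofReal_le_ofReal
        have := add_rpow_le hXu0 hXn0 (le_of_lt hr0)
        linarith
      have hmeas1 : Measurable fun ω => ENNReal.ofReal (2 ^ r * (X u ω) ^ r) := by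
        apply Measurable.ennreal_ofReal
        exact (continuous_const.mul ((hXcont u).rpow_const
          (fun z => Or.inr hr0.le))).measurable
      have hmeas2 : Measurable fun ω => ENNReal.ofReal (2 ^ r * (X (-u) ω) ^ r) := by
        apply Measurable.ennreal_ofReal
        exact (continuous_const.mul ((hXcont (-u)).rpow_const
          (fun z => Or.inr hr0.le))).measurable
      calc (∫⁻ ω, ENNReal.ofReal ((fK u - gfn ω u) ^ r) ∂P) ≤
          ∫⁻ ω, (ENNReal.ofReal (2 ^ r * (X u ω) ^ r) +
            ENNReal.ofReal (2 ^ r * (X (-u) ω) ^ r)) ∂P := lintegral_mono_ae hptwise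
        _ = (∫⁻ ω, ENNReal.ofReal (2 ^ r * (X u ω) ^ r) ∂P) +
            (∫⁻ ω, ENNReal.ofReal (2 ^ r * (X (-u) ω) ^ r) ∂P) :=
            lintegral_add_left hmeas1 _
        _ ≤ ENNReal.ofReal (2 ^ r) * ENNReal.ofReal (δ ^ r * Cm) +
            ENNReal.ofReal (2 ^ r) * ENNReal.ofReal (δ ^ r * Cm) := by
            apply add_le_add
            · calc (∫⁻ ω, ENNReal.ofReal (2 ^ r * (X u ω) ^ r) ∂P) =
                  ENNReal.ofReal (2 ^ r) * (∫⁻ ω, ENNReal.ofReal ((X u ω) ^ r) ∂P) := by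
                    rw [← lintegral_const_mul _ (((hXcont u).rpow_const
                      (fun z => Or.inr hr0.le)).measurable.ennreal_ofReal)]
                    apply lintegral_congr
                    intro ω
                    rw [← ENNReal.ofReal_mul (by positivity)]
                _ ≤ _ := mul_le_mul_right (momentv u hu) _
            · calc (∫⁻ ω, ENNReal.ofReal (2 ^ r * (X (-u) ω) ^ r) ∂P) =
                  ENNReal.ofReal (2 ^ r) * (∫⁻ ω, ENNReal.ofReal ((X (-u) ω) ^ r) ∂P) := by
                    rw [← lintegral_const_mul _ (((hXcont (-u)).rpow_const
                      (fun z => Or.inr hr0.le)).measurable.ennreal_ofReal)]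
                    apply lintegral_congr
                    intro ω
                    rw [← ENNReal.ofReal_mul (by positivity)]
                _ ≤ _ := mul_le_mul_right (momentv (-u) hneg) _
        _ = ENNReal.ofReal (2 ^ (r+1) * (δ ^ r * Cm)) := by
            rw [← ENNReal.ofReal_mul (by positivity),
              ← ENNReal.ofReal_add (by positivity) (by positivity)]
            congr 1
            rw [Real.rpow_add two_pos, Real.rpow_one]
            ring
    calc (∫⁻ u, (∫⁻ ω, ENNReal.ofReal ((fK u - gfn ω u) ^ r) ∂P) ∂(sphereσ d)) ≤
        ∫⁻ _, ENNReal.ofReal (2 ^ (r+1) * (δ ^ r * Cm)) ∂(sphereσ d) := by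
          apply lintegral_mono_ae
          filter_upwards [ae_sphere d] with u hu
          exact hinner u hu
      _ = ENNReal.ofReal (2 ^ (r+1) * (δ ^ r * Cm)) * (sphereσ d) Set.univ :=
          lintegral_const _
      _ ≤ ENNReal.ofReal (2 ^ (r+1) * (δ ^ r * Cm)) * 1 :=
          mul_le_mul_right (sphereσ_univ_le d) _
      _ = ENNReal.ofReal (2 ^ (r+1) * (δ ^ r * Cm)) := mul_one _
  -- main chain
  have hhull : ∀ ω : Fin n → Euc d,
      (fun u => suppFn (hullOf ω) u + suppFn (hullOf ω) (-u)) = gfn ω := by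
    intro ω
    funext u
    simp only [hgfndef, hGmdef]
    rw [suppFn_hullOf_eq hne, suppFn_hullOf_eq hne]
  calc (∫⁻ ω, ENNReal.ofReal
        (|lpNorm d p fK - lpNorm d p (fun u => suppFn (hullOf ω) u + suppFn (hullOf ω) (-u))| ^ q)
        ∂P)
      = ∫⁻ ω, ENNReal.ofReal (|lpNorm d p fK - lpNorm d p (gfn ω)| ^ q) ∂P := by
        apply lintegral_congr
        intro ω
        rw [hhull ω]
    _ ≤ ∫⁻ ω, (Ibar ω) ^ (q/r) ∂P := by
        apply lintegral_mono_ae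
        filter_upwards [haeGd] with ω hω
        exact step1 hp (le_of_lt hq0) hr1 hpr hfKcont (hgcont ω) hfK0 (hg0 ω)
          (hgf ω hω) hfK2
    _ ≤ (∫⁻ ω, Ibar ω ∂P) ^ (q/r) := by
        apply lintegral_rpow_le_rpow_lintegral P (le_of_eq measure_univ)
          hIbarmeas.aemeasurable (by positivity) ((div_le_one hr0).mpr hqr)
    _ ≤ (ENNReal.ofReal (2 ^ (r+1) * (δ ^ r * Cm))) ^ (q/r) :=
        ENNReal.rpow_le_rpow hswap (by positivity)
    _ = ENNReal.ofReal ((2 ^ (r+1) * (δ ^ r * Cm)) ^ (q/r)) :=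
        ENNReal.ofReal_rpow_of_nonneg (by positivity) (by positivity)
    _ ≤ ENNReal.ofReal (Cfin * (n:ℝ) ^ (-(q/α))) := by
        apply ENNReal.ofReal_le_ofReal
        have e1 : (2:ℝ) ^ (r+1) * (δ ^ r * Cm) = (2 ^ (r+1) * Cm) * δ ^ r := by ring
        have e2 : ((2:ℝ) ^ (r+1) * Cm * δ ^ r) ^ (q/r) =
            (2 ^ (r+1) * Cm) ^ (q/r) * (δ ^ r) ^ (q/r) :=
          Real.mul_rpow (by positivity) (by positivity)
        have e3 : ((δ:ℝ) ^ r) ^ (q/r) = (n:ℝ) ^ (-(q/α)) := by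
          rw [← Real.rpow_mul hδ0.le, hδdef, ← Real.rpow_mul (by positivity)]
          congr 1
          field_simp
        rw [e1, e2, e3]
        apply mul_le_mul_of_nonneg_right _ (Real.rpow_nonneg (by positivity) _)
        exact le_max_right _ _
end
end

section
/- Let d ≥ 1 be an integer, 0 < r ≤ 1, let K ∈ K_{d,r}^(1), and let μ be the uniform probability measure on K (normalized Lebesgue measure restricted to K). Then for every u ∈ S^{d−1} and every ε ∈ [0,r], μ(C_K(u,ε)) ≥ (2β_{d−1}·r^{(d−1)/2}/(β_d·(d+1)))·ε^{(d+1)/2}. In particular, (μ,K) belongs to the class M((d+1)/2, 2β_{d−1}·r^{(d−1)/2}/(β_d·(d+1)), r). -/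
open MeasureTheory Metric Set
open scoped RealInnerProductSpace ENNReal NNReal

noncomputable section

open Pointwise in
private lemma image_add_eq_vadd {m : ℕ} (c : Euc m) (T : Set (Euc m)) :
    (fun z => c + z) '' T = c +ᵥ T := by
  ext y; constructor
  · rintro ⟨z, hz, rfl⟩; exact ⟨z, hz, rfl⟩
  · rintro ⟨z, hz, rfl⟩; exact ⟨z, hz, rfl⟩

private lemma vol_cb (m : ℕ) (R : ℝ) (hR : 0 ≤ R) :
    volume (closedBall (0:Euc m) R) = ENNReal.ofReal (R ^ m) * ENNReal.ofReal (unitBallVol m) := by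
  rw [Measure.addHaar_closedBall' volume 0 hR, finrank_euclideanSpace_fin, unitBallVol,
    ENNReal.ofReal_toReal (measure_closedBall_lt_top).ne]

private lemma ubv_pos (m : ℕ) : 0 < unitBallVol m := by
  have h1 : (0:ℝ≥0∞) < volume (closedBall (0:Euc m) 1) :=
    lt_of_lt_of_le (measure_ball_pos volume 0 one_pos) (measure_mono ball_subset_closedBall)
  exact ENNReal.toReal_pos h1.ne' measure_closedBall_lt_top.ne

private lemma vol_section (m : ℕ) (c : ℝ) (hc : 0 ≤ c) :
    volume {w : Fin m → ℝ | ∑ j, w j ^ 2 ≤ c}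
      = ENNReal.ofReal (Real.sqrt c ^ m) * ENNReal.ofReal (unitBallVol m) := by
  have hmeas : MeasurableSet {w : Fin m → ℝ | ∑ j, w j ^ 2 ≤ c} := by
    apply measurableSet_le (by fun_prop) measurable_const
  have hpre : ((MeasurableEquiv.toLp 2 (Fin m → ℝ)).symm) ⁻¹' {w : Fin m → ℝ | ∑ j, w j ^ 2 ≤ c}
      = closedBall (0:Euc m) (Real.sqrt c) := by
    ext x
    simp only [mem_preimage, mem_setOf_eq, mem_closedBall, dist_zero_right, EuclideanSpace.norm_eq]
    have hx : ((MeasurableEquiv.toLp 2 (Fin m → ℝ)).symm) x = fun j => x j := rfl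
    rw [hx]
    constructor
    · intro h
      apply Real.sqrt_le_sqrt
      simpa [Real.norm_eq_abs, sq_abs] using h
    · intro h
      have := (Real.sqrt_le_sqrt_iff (by positivity)).mp
        (by simpa [Real.norm_eq_abs, sq_abs] using h)
      simpa [Real.norm_eq_abs, sq_abs] using this
  rw [← (EuclideanSpace.volume_preserving_symm_measurableEquiv_toLp (Fin m)).measure_preimage
    hmeas.nullMeasurableSet, hpre, vol_cb _ _ (Real.sqrt_nonneg c)]

private lemma lint_rpow (m : ℕ) (r ε : ℝ) (hr : 0 < r) (hε0 : 0 ≤ ε) :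
    ∫⁻ t in Icc (r-ε) r, ENNReal.ofReal (Real.sqrt (r*(r-t)) ^ m)
      = ENNReal.ofReal (r ^ ((m:ℝ)/2)) *
          ENNReal.ofReal (ε ^ (((m:ℝ)/2) + 1) / (((m:ℝ)/2) + 1)) := by
  set p : ℝ := (m:ℝ)/2 with hpdef
  have hp : 0 ≤ p := by positivity
  have hsq : ∀ x : ℝ, 0 ≤ x → Real.sqrt x ^ m = x ^ p := by
    intro x hx
    rw [Real.sqrt_eq_rpow, ← Real.rpow_natCast (x ^ (1/2:ℝ)) m, ← Real.rpow_mul hx]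
    congr 1
    rw [hpdef]; ring
  have step1 : ∫⁻ t in Icc (r-ε) r, ENNReal.ofReal (Real.sqrt (r*(r-t)) ^ m)
      = ∫⁻ t in Icc (r-ε) r, ENNReal.ofReal (r ^ p) * ENNReal.ofReal ((r-t) ^ p) := by
    apply setLIntegral_congr_fun measurableSet_Icc
    intro t ht
    have h1 : 0 ≤ r - t := by linarith [ht.2]
    dsimp only
    rw [Real.sqrt_mul hr.le, mul_pow, hsq r hr.le, hsq _ h1, ← ENNReal.ofReal_mul (by positivity)]
  rw [step1, lintegral_const_mul' _ _ ENNReal.ofReal_ne_top]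
  congr 1
  have hIoc : ∫⁻ t in Icc (r-ε) r, ENNReal.ofReal ((r-t) ^ p)
      = ∫⁻ t in Ioc (r-ε) r, ENNReal.ofReal ((r-t) ^ p) :=
    (setLIntegral_congr Ioc_ae_eq_Icc).symm
  have hcont : Continuous fun t : ℝ => (r - t) ^ p :=
    (Real.continuous_rpow_const hp).comp (continuous_const.sub continuous_id)
  have hint : IntegrableOn (fun t : ℝ => (r - t) ^ p) (Ioc (r-ε) r) volume :=
    hcont.integrableOn_Ioc
  have hnn : 0 ≤ᵐ[volume.restrict (Ioc (r-ε) r)] fun t : ℝ => (r - t) ^ p := by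
    filter_upwards [ae_restrict_mem measurableSet_Ioc] with t ht
    exact Real.rpow_nonneg (by linarith [ht.2]) p
  rw [hIoc, ← ofReal_integral_eq_lintegral_ofReal hint hnn]
  congr 1
  rw [← intervalIntegral.integral_of_le (by linarith : r - ε ≤ r)]
  have := intervalIntegral.integral_comp_sub_left (a := r - ε) (b := r)
    (fun s : ℝ => s ^ p) r
  simp only [sub_self, sub_sub_cancel] at this
  rw [this, integral_rpow (Or.inl (by linarith : (-1:ℝ) < p)),
    Real.zero_rpow (by positivity : p + 1 ≠ 0), sub_zero]

private lemma S2_meas (m : ℕ) (r ε : ℝ) :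
    MeasurableSet {p : ℝ × (Fin m → ℝ) |
      (r - ε ≤ p.1 ∧ p.1 ≤ r) ∧ ∑ j, p.2 j ^ 2 ≤ r * (r - p.1)} := by
  apply MeasurableSet.inter
  · exact (measurableSet_le measurable_const measurable_fst).inter
      (measurableSet_le measurable_fst measurable_const)
  · exact measurableSet_le (f := fun p : ℝ × (Fin m → ℝ) => ∑ j, p.2 j ^ 2)
      (g := fun p : ℝ × (Fin m → ℝ) => r * (r - p.1)) (by fun_prop) (by fun_prop)

private lemma prodvol (m : ℕ) (r ε : ℝ) (hr : 0 < r) (hε0 : 0 ≤ ε) (hεr : ε ≤ r) :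
    (volume.prod volume) {p : ℝ × (Fin m → ℝ) |
        (r - ε ≤ p.1 ∧ p.1 ≤ r) ∧ ∑ j, p.2 j ^ 2 ≤ r * (r - p.1)}
      = ENNReal.ofReal (unitBallVol m) * (ENNReal.ofReal (r ^ ((m:ℝ)/2)) *
          ENNReal.ofReal (ε ^ (((m:ℝ)/2) + 1) / (((m:ℝ)/2) + 1))) := by
  rw [Measure.prod_apply (S2_meas m r ε)]
  have key : ∀ t : ℝ, volume (Prod.mk t ⁻¹' {p : ℝ × (Fin m → ℝ) |
        (r - ε ≤ p.1 ∧ p.1 ≤ r) ∧ ∑ j, p.2 j ^ 2 ≤ r * (r - p.1)})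
      = (Icc (r-ε) r).indicator
          (fun t => ENNReal.ofReal (Real.sqrt (r*(r-t)) ^ m) *
            ENNReal.ofReal (unitBallVol m)) t := by
    intro t
    by_cases ht : t ∈ Icc (r-ε) r
    · rw [indicator_of_mem ht]
      have hset : (Prod.mk t ⁻¹' {p : ℝ × (Fin m → ℝ) |
          (r - ε ≤ p.1 ∧ p.1 ≤ r) ∧ ∑ j, p.2 j ^ 2 ≤ r * (r - p.1)})
          = {w : Fin m → ℝ | ∑ j, w j ^ 2 ≤ r * (r - t)} := by
        ext w
        simp only [mem_preimage, mem_setOf_eq]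
        exact ⟨fun h => h.2, fun h => ⟨⟨ht.1, ht.2⟩, h⟩⟩
      rw [hset, vol_section m _ (by nlinarith [ht.2] : (0:ℝ) ≤ r * (r - t))]
    · rw [indicator_of_notMem ht]
      have hset : (Prod.mk t ⁻¹' {p : ℝ × (Fin m → ℝ) |
          (r - ε ≤ p.1 ∧ p.1 ≤ r) ∧ ∑ j, p.2 j ^ 2 ≤ r * (r - p.1)}) = ∅ := by
        ext w
        simp only [mem_preimage, mem_setOf_eq, mem_empty_iff_false, iff_false]
        intro h
        exact ht ⟨h.1.1, h.1.2⟩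
      rw [hset, measure_empty]
  simp only [key]
  rw [lintegral_indicator measurableSet_Icc,
    lintegral_mul_const' _ _ ENNReal.ofReal_ne_top, lint_rpow m r ε hr hε0]
  ring

private lemma norm_sub_single_sq (m : ℕ) (v : Euc (m+1)) :
    ‖v - (v 0) • EuclideanSpace.single (0 : Fin (m+1)) (1:ℝ)‖^2
      = ∑ j : Fin m, (v (Fin.succ j))^2 := by
  have h : ‖v - (v 0) • EuclideanSpace.single (0 : Fin (m+1)) (1:ℝ)‖^2
      = ∑ i : Fin (m+1), (v i - (v 0) * (EuclideanSpace.single (0 : Fin (m+1)) (1:ℝ)) i)^2 := by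
    rw [EuclideanSpace.norm_eq, Real.sq_sqrt (by positivity)]
    congr 1; ext i
    simp [Real.norm_eq_abs, sq_abs, PiLp.sub_apply, PiLp.smul_apply, smul_eq_mul]
  rw [h, Fin.sum_univ_succ]
  simp [EuclideanSpace.single_apply, Fin.succ_ne_zero]

private lemma Tvol (m : ℕ) (r ε : ℝ) (hr : 0 < r) (hε0 : 0 ≤ ε) (hεr : ε ≤ r)
    (u : Euc (m+1)) (hu : ‖u‖ = 1) :
    volume {z : Euc (m+1) | (r - ε ≤ (inner ℝ u z : ℝ) ∧ (inner ℝ u z : ℝ) ≤ r) ∧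
        ‖z - ((inner ℝ u z : ℝ)) • u‖^2 ≤ r * (r - (inner ℝ u z : ℝ))}
      = ENNReal.ofReal (unitBallVol m) * (ENNReal.ofReal (r ^ ((m:ℝ)/2)) *
          ENNReal.ofReal (ε ^ (((m:ℝ)/2) + 1) / (((m:ℝ)/2) + 1))) := by
  have card : Module.finrank ℝ (Euc (m+1)) = Fintype.card (Fin (m+1)) := by
    simp [finrank_euclideanSpace_fin]
  have hON : Orthonormal ℝ (({0} : Set (Fin (m+1))).restrict (fun _ => u)) := by
    constructor
    · intro i; exact hu
    · rintro ⟨i, hi⟩ ⟨j, hj⟩ hij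
      exact absurd (Subtype.ext (hi.trans hj.symm)) hij
  obtain ⟨b, hb⟩ := hON.exists_orthonormalBasis_extension_of_card_eq card
  have hb0 : b 0 = u := hb 0 rfl
  set S2 : Set (ℝ × (Fin m → ℝ)) :=
    {p | (r - ε ≤ p.1 ∧ p.1 ≤ r) ∧ ∑ j, p.2 j ^ 2 ≤ r * (r - p.1)} with hS2
  set F : Euc (m+1) → ℝ × (Fin m → ℝ) :=
    (MeasurableEquiv.piFinSuccAbove (fun _ => ℝ) 0) ∘
      ((MeasurableEquiv.toLp 2 (Fin (m+1) → ℝ)).symm) ∘ b.repr with hF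
  have hFmp : MeasurePreserving F volume ((volume : Measure ℝ).prod volume) := by
    have h3 := b.measurePreserving_repr
    have h2 := EuclideanSpace.volume_preserving_symm_measurableEquiv_toLp (Fin (m+1))
    have h1 := volume_preserving_piFinSuccAbove (fun _ : Fin (m+1) => ℝ) 0
    exact h1.comp (h2.comp h3)
  have hpre : {z : Euc (m+1) | (r - ε ≤ (inner ℝ u z : ℝ) ∧ (inner ℝ u z : ℝ) ≤ r) ∧
        ‖z - ((inner ℝ u z : ℝ)) • u‖^2 ≤ r * (r - (inner ℝ u z : ℝ))} = F ⁻¹' S2 := by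
    ext z
    have h0 : (b.repr z) 0 = (inner ℝ u z : ℝ) := by
      rw [← hb0, b.repr_apply_apply]
    have hF1 : F z = ((b.repr z) 0, fun j : Fin m => (b.repr z) (Fin.succ j)) := by
      rw [hF]
      simp only [Function.comp_apply, MeasurableEquiv.piFinSuccAbove_apply]
      congr
    have hnorm : ‖z - ((inner ℝ u z : ℝ)) • u‖^2
        = ∑ j : Fin m, ((b.repr z) (Fin.succ j))^2 := by
      have heq : b.repr (z - ((inner ℝ u z : ℝ)) • u)
          = b.repr z - ((b.repr z) 0) • EuclideanSpace.single (0 : Fin (m+1)) (1:ℝ) := by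
        rw [map_sub, _root_.map_smul, ← hb0, b.repr_self, h0, hb0]
      rw [← b.repr.norm_map (z - ((inner ℝ u z : ℝ)) • u), heq, norm_sub_single_sq]
    simp only [mem_setOf_eq, mem_preimage, hF1, hS2, mem_setOf_eq, h0, hnorm]
  rw [hpre, hFmp.measure_preimage (S2_meas m r ε).nullMeasurableSet, prodvol m r ε hr hε0 hεr]

private lemma capBound (m : ℕ) (r : ℝ) (hr0 : 0 < r) (K : Set (Euc (m+1)))
    (hK : K ∈ Kdr1 (m+1) r) (u : Euc (m+1)) (hu : ‖u‖ = 1) (ε : ℝ) (hε : ε ∈ Icc 0 r) :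
    ENNReal.ofReal ((2 * unitBallVol m * r ^ ((m:ℝ)/2) / (unitBallVol (m+1) * ((m:ℝ)+2)))
        * ε ^ ((m:ℝ)/2 + 1)) ≤ unifOn K (cap K u ε) := by
  obtain ⟨⟨hconv, hcomp, hint⟩, hsub, hroll⟩ := hK
  obtain ⟨hε0, hεr⟩ := hε
  obtain ⟨x₀, hx₀⟩ := hint
  have hKne : K.Nonempty := ⟨x₀, interior_subset hx₀⟩
  have hcontf : Continuous fun x : Euc (m+1) => (inner ℝ u x : ℝ) :=
    continuous_const.inner continuous_id
  have hbdd : BddAbove ((fun x => (inner ℝ u x : ℝ)) '' K) := (hcomp.image hcontf).bddAbove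
  have hub : ∀ y ∈ K, (inner ℝ u y : ℝ) ≤ suppFn K u := fun y hy => le_csSup hbdd ⟨y, hy, rfl⟩
  obtain ⟨x, hxK, hxmax⟩ := hcomp.exists_isMaxOn hKne hcontf.continuousOn
  have hhx : suppFn K u = (inner ℝ u x : ℝ) :=
    le_antisymm (csSup_le (hKne.image _) (by rintro _ ⟨y, hy, rfl⟩; exact hxmax hy)) (hub x hxK)
  have hxfr : x ∈ frontier K := by
    rw [hcomp.isClosed.frontier_eq]
    refine ⟨hxK, fun hxint => ?_⟩
    obtain ⟨δ, hδ, hball⟩ := Metric.isOpen_iff.1 isOpen_interior x hxint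
    have hyK : x + (δ/2) • u ∈ K := by
      apply interior_subset (hball ?_)
      rw [mem_ball, dist_self_add_left, norm_smul, hu, mul_one, Real.norm_eq_abs,
        abs_of_pos (by linarith)]
      linarith
    have h1 := hub _ hyK
    rw [inner_add_right, real_inner_smul_right, real_inner_self_eq_norm_sq, hu] at h1
    rw [hhx] at h1
    nlinarith
  obtain ⟨c, hxc, hcK⟩ := hroll x hxfr
  have hhc : suppFn K u ≤ (inner ℝ u c : ℝ) + r := by
    have h2 : (inner ℝ u (x - c) : ℝ) ≤ r := by
      calc (inner ℝ u (x - c) : ℝ) ≤ ‖u‖ * ‖x - c‖ := real_inner_le_norm u (x - c)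
      _ = ‖x - c‖ := by rw [hu, one_mul]
      _ ≤ r := by rw [← dist_eq_norm]; exact mem_closedBall.1 hxc
    rw [inner_sub_right] at h2
    rw [hhx]; linarith
  set T := {z : Euc (m+1) | (r - ε ≤ (inner ℝ u z : ℝ) ∧ (inner ℝ u z : ℝ) ≤ r) ∧
      ‖z - ((inner ℝ u z : ℝ)) • u‖^2 ≤ r * (r - (inner ℝ u z : ℝ))} with hT
  have hTsub : (fun z => c + z) '' T ⊆ cap K u ε := by
    rintro _ ⟨z, ⟨⟨hz1, hz2⟩, hz3⟩, rfl⟩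
    set t := (inner ℝ u z : ℝ) with htdef
    have ht0 : 0 ≤ t := by linarith
    have hzn : ‖z‖ ≤ r := by
      have hw : (inner ℝ u (z - t • u) : ℝ) = 0 := by
        rw [inner_sub_right, real_inner_smul_right, real_inner_self_eq_norm_sq, hu]
        ring
      have hdecomp : ‖z‖^2 = t^2 + ‖z - t • u‖^2 := by
        have hzz : z = t • u + (z - t • u) := by abel
        calc ‖z‖^2 = ‖t • u + (z - t • u)‖^2 := by rw [← hzz]
        _ = ‖t • u‖^2 + 2 * (inner ℝ (t • u) (z - t • u) : ℝ) + ‖z - t • u‖^2 :=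
          norm_add_sq_real _ _
        _ = t^2 + ‖z - t • u‖^2 := by
          rw [real_inner_smul_left, hw, norm_smul, hu, mul_one, Real.norm_eq_abs, sq_abs]
          ring
      nlinarith [norm_nonneg z, norm_nonneg (z - t • u)]
    have hcz : c + z ∈ K := by
      apply hcK
      rw [mem_closedBall, dist_eq_norm, add_sub_cancel_left]
      exact hzn
    refine ⟨hcz, ?_⟩
    have h3 : (inner ℝ u (c + z) : ℝ) = (inner ℝ u c : ℝ) + t := by rw [inner_add_right]
    rw [h3]
    linarith
  have hKmeas : MeasurableSet K := hcomp.isClosed.measurableSet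
  have hcapK : cap K u ε ∩ K = cap K u ε := inter_eq_left.2 (fun y hy => hy.1)
  have hKne' : volume K ≠ 0 := by
    have := (isOpen_interior (s := K)).measure_pos volume ⟨x₀, hx₀⟩
    exact (this.trans_le (measure_mono interior_subset)).ne'
  have hKle : volume K ≤ volume (closedBall (0:Euc (m+1)) 1) := measure_mono hsub
  have hBvol : volume (closedBall (0:Euc (m+1)) 1) = ENNReal.ofReal (unitBallVol (m+1)) :=
    (ENNReal.ofReal_toReal measure_closedBall_lt_top.ne).symm
  set q : ℝ := (m:ℝ)/2 + 1 with hq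
  have hq0 : (0:ℝ) < q := by positivity
  set A : ℝ := unitBallVol m * (r ^ ((m:ℝ)/2) * (ε ^ q / q)) with hA
  have hA_eq : (2 * unitBallVol m * r ^ ((m:ℝ)/2) / (unitBallVol (m+1) * ((m:ℝ)+2))) * ε ^ q
      = (unitBallVol (m+1))⁻¹ * A := by
    have h1 : unitBallVol (m+1) ≠ 0 := (ubv_pos (m+1)).ne'
    have h2 : (m:ℝ) + 2 ≠ 0 := by positivity
    rw [hA, hq]
    field_simp
  have hAnn : 0 ≤ A := by
    have := (ubv_pos m).le
    have h4 : 0 ≤ r ^ ((m:ℝ)/2) := Real.rpow_nonneg hr0.le _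
    have h5 : 0 ≤ ε ^ q / q := by positivity
    positivity
  calc ENNReal.ofReal ((2 * unitBallVol m * r ^ ((m:ℝ)/2) /
          (unitBallVol (m+1) * ((m:ℝ)+2))) * ε ^ q)
      = (ENNReal.ofReal (unitBallVol (m+1)))⁻¹ * ENNReal.ofReal A := by
        rw [hA_eq, ENNReal.ofReal_mul (inv_nonneg.2 (ubv_pos _).le),
          ENNReal.ofReal_inv_of_pos (ubv_pos _)]
    _ ≤ (volume K)⁻¹ * ENNReal.ofReal A := by
        apply mul_le_mul_left
        apply ENNReal.inv_le_inv.mpr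
        rw [← hBvol]; exact hKle
    _ = (volume K)⁻¹ * volume T := by
        rw [hT, Tvol m r ε hr0 hε0 hεr u hu, hA,
          ENNReal.ofReal_mul (ubv_pos m).le,
          ENNReal.ofReal_mul (Real.rpow_nonneg hr0.le _)]
    _ = (volume K)⁻¹ * volume ((fun z => c + z) '' T) := by
        rw [image_add_eq_vadd, measure_vadd]
    _ ≤ (volume K)⁻¹ * volume (cap K u ε) :=
        mul_le_mul_right (measure_mono hTsub) _
    _ = unifOn K (cap K u ε) := by
        rw [unifOn, Measure.smul_apply, smul_eq_mul, Measure.restrict_apply' hKmeas, hcapK]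

theorem stmt8 (d : ℕ) (hd : 1 ≤ d) (r : ℝ) (hr0 : 0 < r) (hr1 : r ≤ 1)
    (K : Set (Euc d)) (hK : K ∈ Kdr1 d r) :
    (∀ u : Euc d, ‖u‖ = 1 → ∀ ε : ℝ, ε ∈ Icc 0 r →
        ENNReal.ofReal
            ((2 * unitBallVol (d-1) * r ^ (((d:ℝ)-1)/2) / (unitBallVol d * ((d:ℝ)+1)))
              * ε ^ (((d:ℝ)+1)/2))
          ≤ unifOn K (cap K u ε)) ∧
      MemM (((d:ℝ)+1)/2)
        (2 * unitBallVol (d-1) * r ^ (((d:ℝ)-1)/2) / (unitBallVol d * ((d:ℝ)+1)))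
        r (unifOn K) K := by
  obtain ⟨m, rfl⟩ : ∃ m, d = m + 1 := ⟨d - 1, (Nat.succ_pred_eq_of_pos hd).symm⟩
  have e4 : (m + 1) - 1 = m := by omega
  have e1 : (((m+1:ℕ):ℝ) - 1)/2 = (m:ℝ)/2 := by push_cast; ring
  have e2 : (((m+1:ℕ):ℝ) + 1)/2 = (m:ℝ)/2 + 1 := by push_cast; ring
  have e3 : ((m+1:ℕ):ℝ) + 1 = (m:ℝ) + 2 := by push_cast; ring
  have ecast : ∀ ε : ℝ,
      (2 * unitBallVol ((m+1)-1) * r ^ ((((m+1:ℕ):ℝ)-1)/2) /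
          (unitBallVol (m+1) * (((m+1:ℕ):ℝ)+1))) * ε ^ ((((m+1:ℕ):ℝ)+1)/2)
        = (2 * unitBallVol m * r ^ ((m:ℝ)/2) /
            (unitBallVol (m+1) * ((m:ℝ)+2))) * ε ^ ((m:ℝ)/2 + 1) := by
    intro ε
    rw [e4, e1, e2, e3]
  have bullet : ∀ u : Euc (m+1), ‖u‖ = 1 → ∀ ε : ℝ, ε ∈ Icc 0 r →
      ENNReal.ofReal
          ((2 * unitBallVol ((m+1)-1) * r ^ ((((m+1:ℕ):ℝ)-1)/2) /
            (unitBallVol (m+1) * (((m+1:ℕ):ℝ)+1))) * ε ^ ((((m+1:ℕ):ℝ)+1)/2))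
        ≤ unifOn K (cap K u ε) := by
    intro u hu ε hε
    rw [ecast ε]
    exact capBound m r hr0 K hK u hu ε hε
  obtain ⟨⟨hconv, hcomp, hint⟩, hsub, hroll⟩ := hK
  have hKmeas : MeasurableSet K := hcomp.isClosed.measurableSet
  have hKne' : volume K ≠ 0 := by
    have := (isOpen_interior (s := K)).measure_pos volume hint
    exact (this.trans_le (measure_mono interior_subset)).ne'
  have hKfin : volume K ≠ ⊤ := hcomp.measure_lt_top.ne
  refine ⟨bullet, ?_, ⟨hconv, hcomp, hint⟩, hsub, ?_, bullet⟩
  · constructor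
    rw [unifOn, Measure.smul_apply, smul_eq_mul, Measure.restrict_apply_univ]
    exact ENNReal.inv_mul_cancel hKne' hKfin
  · intro x hx
    by_contra hxK
    apply hx
    refine ⟨Kᶜ, ⟨hcomp.isClosed.isOpen_compl, ?_⟩, hxK⟩
    rw [unifOn, Measure.smul_apply, smul_eq_mul, Measure.restrict_apply' hKmeas,
      compl_inter_self, measure_empty, mul_zero]
end
end
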